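/- arXiv:1710.07741 — 11 statements merged into one kernel-verified Lean document; each statement's English description precedes it below -/
import Mathlib

section
/- A graph G admits a bipartizing matching if and only if G admits a (2,1)-coloring, i.e., a partition of V(G) into two sets each inducing a subgraph of maximum degree at most 1. -/
/-- `M` is a bipartizing matching of `G`: `M` is a subgraph of `G` that is a matching
(every vertex has at most one `M`-neighbor) and `G - M` is bipartite (2-colorable). -/
def IsBipartizingMatching {V : Type*} (G M : SimpleGraph V) : Prop :=
  M ≤ G ∧ (∀ v u w : V, M.Adj v u → M.Adj v w → u = w) ∧ (G \ M).Colorable 2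

/-- `G` has a bipartizing matching iff `G` has a `(2,1)`-coloring. -/
theorem bm_iff_two_one_coloring {V : Type*} (G : SimpleGraph V) :
    (∃ M, IsBipartizingMatching G M) ↔
      ∃ c : V → Fin 2, ∀ v : V, {u : V | G.Adj v u ∧ c u = c v}.Subsingleton := by
  constructor
  · rintro ⟨M, hMG, hmatch, ⟨C⟩⟩
    refine ⟨C, fun v u hu w hw => ?_⟩
    simp only [Set.mem_setOf_eq] at hu hw
    have hM : ∀ x : V, G.Adj v x → C x = C v → M.Adj v x := by
      intro x hx hcx
      by_contra h
      exact C.valid ((SimpleGraph.sdiff_adj _ _ _ _).mpr ⟨hx, h⟩) hcx.symm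
    exact hmatch v u w (hM u hu.1 hu.2) (hM w hw.1 hw.2)
  · rintro ⟨c, hc⟩
    refine ⟨⟨fun a b => G.Adj a b ∧ c a = c b,
      ⟨fun a b h => ⟨h.1.symm, h.2.symm⟩⟩,
      ⟨fun a h => G.loopless.irrefl a h.1⟩⟩, fun a b h => h.1, ?_, ?_⟩
    · intro v u w hu hw
      exact hc v ⟨hu.1, hu.2.symm⟩ ⟨hw.1, hw.2.symm⟩
    · exact ⟨⟨c, fun {a b} h heq => h.2 ⟨h.1, heq⟩⟩⟩
end

section
/- Every graph of maximum degree at most 3 admits a bipartizing matching. -/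
open Finset

private lemma count_split {V : Type*} [Fintype V] [DecidableEq V] (G : SimpleGraph V)
    [DecidableRel G.Adj] (d : V → Bool) (v : V) :
    (univ.filter (fun p : V × V => G.Adj p.1 p.2 ∧ d p.1 = d p.2)).card =
      2 * ((G.neighborFinset v).filter (fun u => d u = d v)).card +
      (univ.filter (fun p : V × V =>
        (G.Adj p.1 p.2 ∧ d p.1 = d p.2) ∧ p.1 ≠ v ∧ p.2 ≠ v)).card := by
  classical
  set F := univ.filter (fun p : V × V => G.Adj p.1 p.2 ∧ d p.1 = d p.2) with hF
  have h1 : (F.filter (fun p => p.1 = v)).card + (F.filter (fun p => ¬ p.1 = v)).card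
      = F.card := card_filter_add_card_filter_not _
  have h2 : ((F.filter (fun p => ¬ p.1 = v)).filter (fun p => p.2 = v)).card
      + ((F.filter (fun p => ¬ p.1 = v)).filter (fun p => ¬ p.2 = v)).card
      = (F.filter (fun p => ¬ p.1 = v)).card := card_filter_add_card_filter_not _
  have e1 : (F.filter (fun p => p.1 = v)).card
      = ((G.neighborFinset v).filter (fun u => d u = d v)).card := by
    have himg : F.filter (fun p => p.1 = v)
        = ((G.neighborFinset v).filter (fun u => d u = d v)).image (fun u => (v, u)) := by
      ext ⟨a, b⟩
      simp only [hF, mem_filter, mem_univ, true_and, mem_image,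
        SimpleGraph.mem_neighborFinset, Prod.mk.injEq]
      constructor
      · rintro ⟨⟨hadj, heq⟩, rfl⟩
        exact ⟨b, ⟨hadj, heq.symm⟩, rfl, rfl⟩
      · rintro ⟨u, ⟨hadj, heq⟩, rfl, rfl⟩
        exact ⟨⟨hadj, heq.symm⟩, rfl⟩
    rw [himg, Finset.card_image_of_injective _ (fun a b e => by simpa using e)]
  have e2 : ((F.filter (fun p => ¬ p.1 = v)).filter (fun p => p.2 = v)).card
      = ((G.neighborFinset v).filter (fun u => d u = d v)).card := by
    have himg : (F.filter (fun p => ¬ p.1 = v)).filter (fun p => p.2 = v)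
        = ((G.neighborFinset v).filter (fun u => d u = d v)).image (fun u => (u, v)) := by
      ext ⟨a, b⟩
      simp only [hF, mem_filter, mem_univ, true_and, mem_image,
        SimpleGraph.mem_neighborFinset, Prod.mk.injEq]
      constructor
      · rintro ⟨⟨⟨hadj, heq⟩, -⟩, rfl⟩
        exact ⟨a, ⟨hadj.symm, heq⟩, rfl, rfl⟩
      · rintro ⟨u, ⟨hadj, heq⟩, rfl, rfl⟩
        exact ⟨⟨⟨hadj.symm, heq⟩, fun e => G.irrefl (e ▸ hadj)⟩, rfl⟩
    rw [himg, Finset.card_image_of_injective _ (fun a b e => by simpa using e)]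
  have e3 : (F.filter (fun p => ¬ p.1 = v)).filter (fun p => ¬ p.2 = v)
      = univ.filter (fun p : V × V =>
        (G.Adj p.1 p.2 ∧ d p.1 = d p.2) ∧ p.1 ≠ v ∧ p.2 ≠ v) := by
    ext p
    simp only [hF, mem_filter, mem_univ, true_and, ne_eq]
    tauto
  have e3' : ((F.filter (fun p => ¬ p.1 = v)).filter (fun p => ¬ p.2 = v)).card
      = (univ.filter (fun p : V × V =>
        (G.Adj p.1 p.2 ∧ d p.1 = d p.2) ∧ p.1 ≠ v ∧ p.2 ≠ v)).card := by rw [e3]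
  omega

/-- Every graph of maximum degree at most `3` admits a bipartizing matching. -/
theorem bm_of_maxDegree_le_three {V : Type*} [Fintype V] (G : SimpleGraph V)
    [DecidableRel G.Adj] (h : ∀ v : V, G.degree v ≤ 3) :
    ∃ M, IsBipartizingMatching G M := by
  classical
  obtain ⟨c, -, hc⟩ := Finset.exists_min_image (univ : Finset (V → Bool))
    (fun c => (univ.filter (fun p : V × V => G.Adj p.1 p.2 ∧ c p.1 = c p.2)).card)
    ⟨fun _ => true, mem_univ _⟩
  have key : ∀ v, ((G.neighborFinset v).filter (fun u => c u = c v)).card ≤ 1 := by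
    intro v
    by_contra hS
    push_neg at hS
    have hST : ((G.neighborFinset v).filter (fun u => c u = c v)).card
        + ((G.neighborFinset v).filter (fun u => ¬ c u = c v)).card
        = G.degree v := card_filter_add_card_filter_not _
    set c' : V → Bool := Function.update c v (!c v) with hc'
    have hsame : ((G.neighborFinset v).filter (fun u => c' u = c' v))
        = ((G.neighborFinset v).filter (fun u => ¬ c u = c v)) := by
      ext u
      simp only [mem_filter, SimpleGraph.mem_neighborFinset, and_congr_right_iff]
      intro hadj
      have hne : u ≠ v := fun e => (G.irrefl (e ▸ hadj))
      simp [hc', Function.update_of_ne hne, Function.update_self]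
      cases c u <;> cases c v <;> simp
    have hrest : (univ.filter (fun p : V × V =>
          (G.Adj p.1 p.2 ∧ c' p.1 = c' p.2) ∧ p.1 ≠ v ∧ p.2 ≠ v))
        = (univ.filter (fun p : V × V =>
          (G.Adj p.1 p.2 ∧ c p.1 = c p.2) ∧ p.1 ≠ v ∧ p.2 ≠ v)) := by
      ext p
      simp only [mem_filter, mem_univ, true_and, ne_eq]
      constructor
      · rintro ⟨⟨ha, he⟩, h1, h2⟩
        rw [hc', Function.update_of_ne h1, Function.update_of_ne h2] at he
        exact ⟨⟨ha, he⟩, h1, h2⟩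
      · rintro ⟨⟨ha, he⟩, h1, h2⟩
        rw [hc']
        rw [Function.update_of_ne h1, Function.update_of_ne h2]
        exact ⟨⟨ha, he⟩, h1, h2⟩
    have hcount := count_split G c v
    have hcount' := count_split G c' v
    rw [hsame, hrest] at hcount'
    have hmin := hc c' (mem_univ _)
    have hd := h v
    omega
  refine ⟨{ Adj := fun u w => G.Adj u w ∧ c u = c w,
            symm := ⟨fun u w ⟨ha, he⟩ => ⟨ha.symm, he.symm⟩⟩,
            loopless := ⟨fun u ⟨ha, _⟩ => G.irrefl ha⟩ }, ?_, ?_, ?_⟩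
  · intro u w hw; exact hw.1
  · intro v u w hu hw
    have h1 : u ∈ (G.neighborFinset v).filter (fun x => c x = c v) := by
      simp [SimpleGraph.mem_neighborFinset, hu.1, hu.2.symm]
    have h2 : w ∈ (G.neighborFinset v).filter (fun x => c x = c v) := by
      simp [SimpleGraph.mem_neighborFinset, hw.1, hw.2.symm]
    exact Finset.card_le_one.mp (key v) u h1 w h2
  · refine ⟨SimpleGraph.Coloring.mk (fun v => if c v then 0 else 1) ?_⟩
    intro u w huw
    rw [SimpleGraph.sdiff_adj] at huw
    obtain ⟨ha, hn⟩ := huw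
    have : ¬ c u = c w := fun he => hn ⟨ha, he⟩
    cases hu : c u <;> cases hw : c w <;> simp_all
end

section
/- For every positive integer k and every integer d ≥ 0, every graph G of maximum degree Δ admits a (k, ⌊Δ/k⌋)-coloring, i.e., a partition of V(G) into k parts such that each part induces a subgraph of maximum degree at most ⌊Δ/k⌋. -/
open Finset

/-- Lovász: every graph of maximum degree at most `Δ` admits a `(k, ⌊Δ/k⌋)`-coloring. -/
theorem lovasz_partition {V : Type*} [Fintype V] [DecidableEq V] (G : SimpleGraph V)
    [DecidableRel G.Adj] (k Δ : ℕ) (hk : 0 < k) (hΔ : ∀ v : V, G.degree v ≤ Δ) :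
    ∃ c : V → Fin k, ∀ v : V,
      ((G.neighborFinset v).filter (fun u => c u = c v)).card ≤ Δ / k := by
  haveI : NeZero k := ⟨hk.ne'⟩
  set f : (V → Fin k) → ℕ :=
    fun c => ∑ u, ((G.neighborFinset u).filter (fun w => c w = c u)).card with hf
  obtain ⟨c, -, hmin⟩ := Finset.exists_min_image (univ : Finset (V → Fin k)) f
    ⟨fun _ => 0, mem_univ _⟩
  refine ⟨c, fun v => ?_⟩
  by_contra hlt
  push_neg at hlt
  set nn : Fin k → ℕ := fun b => ((G.neighborFinset v).filter (fun u => c u = b)).card with hnn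
  have hne : ∀ u ∈ G.neighborFinset v, u ≠ v := fun u hu =>
    ((G.mem_neighborFinset v u).1 hu).ne'
  -- sum of fibers is the degree
  have hsum : ∑ b, nn b = G.degree v := by
    rw [SimpleGraph.degree, Finset.card_eq_sum_card_fiberwise (f := c) (t := univ)
      (fun x _ => mem_univ _)]
  -- pigeonhole: some color class small
  have hb : ∃ b, nn b ≤ Δ / k := by
    by_contra h
    push_neg at h
    have h1 : ∀ b : Fin k, Δ / k + 1 ≤ nn b := fun b => h b
    have h2 : (univ : Finset (Fin k)).card • (Δ / k + 1) ≤ ∑ b, nn b := by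
      rw [← Finset.sum_const]
      exact Finset.sum_le_sum fun b _ => h1 b
    rw [Finset.card_univ, Fintype.card_fin, smul_eq_mul] at h2
    have h3 : k * (Δ / k) + Δ % k = Δ := Nat.div_add_mod Δ k
    have h4 : Δ % k < k := Nat.mod_lt _ hk
    have h5 : ∑ b, nn b ≤ Δ := hsum ▸ hΔ v
    have h6 : k * (Δ / k + 1) = k * (Δ / k) + k := by ring
    omega
  obtain ⟨b, hb⟩ := hb
  set c' := Function.update c v b with hc'
  -- value of the v-term
  have hv' : ((G.neighborFinset v).filter (fun w => c' w = c' v)).card = nn b := by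
    rw [hnn]
    congr 1
    apply Finset.filter_congr
    intro w hw
    simp [hc', Function.update_of_ne (hne w hw), Function.update_self]
  have hvc : ((G.neighborFinset v).filter (fun w => c w = c v)).card = nn (c v) := rfl
  -- termwise identity for u ≠ v
  have hterm : ∀ u ∈ (univ : Finset V).erase v,
      ((G.neighborFinset u).filter (fun w => c' w = c' u)).card
        + (if v ∈ G.neighborFinset u then (if c v = c u then 1 else 0) else 0)
      = ((G.neighborFinset u).filter (fun w => c w = c u)).card
        + (if v ∈ G.neighborFinset u then (if b = c u then 1 else 0) else 0) := by
    intro u hu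
    have huv : u ≠ v := (Finset.mem_erase.1 hu).1
    have hcu : c' u = c u := Function.update_of_ne huv _ _
    rw [Finset.card_filter, Finset.card_filter]
    by_cases hvN : v ∈ G.neighborFinset u
    · rw [if_pos hvN, if_pos hvN,
        ← Finset.add_sum_erase _ _ hvN, ← Finset.add_sum_erase _ _ hvN]
      have hrest : ∑ w ∈ (G.neighborFinset u).erase v, (if c' w = c' u then 1 else 0)
          = ∑ w ∈ (G.neighborFinset u).erase v, (if c w = c u then 1 else 0) := by
        apply Finset.sum_congr rfl
        intro w hw
        rw [hc', Function.update_of_ne (Finset.mem_erase.1 hw).1,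
          Function.update_of_ne huv]
      rw [hrest]
      simp only [hc', Function.update_self, Function.update_of_ne huv]
      ring
    · rw [if_neg hvN, if_neg hvN, add_zero, add_zero]
      apply Finset.sum_congr rfl
      intro w hw
      have hwv : w ≠ v := fun h => hvN (h ▸ hw)
      rw [hc', Function.update_of_ne hwv, Function.update_of_ne huv]
  -- sum of the correction terms is a fiber count
  have hcorr : ∀ x : Fin k,
      ∑ u ∈ (univ : Finset V).erase v,
        (if v ∈ G.neighborFinset u then (if x = c u then 1 else 0) else 0) = nn x := by
    intro x
    have h0 : (if v ∈ G.neighborFinset v then (if x = c v then 1 else 0) else 0) = 0 := by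
      simp [SimpleGraph.notMem_neighborFinset_self]
    have := Finset.add_sum_erase (univ : Finset V)
      (fun u => if v ∈ G.neighborFinset u then (if x = c u then 1 else 0) else 0) (mem_univ v)
    simp only [h0, zero_add] at this
    rw [this]
    have : ∀ u : V, (if v ∈ G.neighborFinset u then (if x = c u then 1 else 0) else 0)
        = (if v ∈ G.neighborFinset u ∧ x = c u then 1 else 0) := by
      intro u; by_cases h1 : v ∈ G.neighborFinset u <;> simp [h1]
    simp_rw [this]
    rw [← Finset.card_filter, hnn]
    congr 1
    ext u
    simp only [Finset.mem_filter, Finset.mem_univ, true_and, SimpleGraph.mem_neighborFinset]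
    constructor
    · rintro ⟨h1, h2⟩; exact ⟨h1.symm, h2.symm⟩
    · rintro ⟨h1, h2⟩; exact ⟨h1.symm, h2.symm⟩
  -- combine
  have hE : ∑ u ∈ (univ : Finset V).erase v,
        ((G.neighborFinset u).filter (fun w => c' w = c' u)).card + nn (c v)
      = ∑ u ∈ (univ : Finset V).erase v,
        ((G.neighborFinset u).filter (fun w => c w = c u)).card + nn b := by
    rw [← hcorr (c v), ← hcorr b, ← Finset.sum_add_distrib, ← Finset.sum_add_distrib]
    exact Finset.sum_congr rfl hterm
  have hfc' : f c' = nn b + ∑ u ∈ (univ : Finset V).erase v,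
      ((G.neighborFinset u).filter (fun w => c' w = c' u)).card := by
    simp only [hf]
    rw [← Finset.add_sum_erase _ _ (mem_univ v), hv']
  have hfc : f c = nn (c v) + ∑ u ∈ (univ : Finset V).erase v,
      ((G.neighborFinset u).filter (fun w => c w = c u)).card := by
    simp only [hf]
    rw [← Finset.add_sum_erase _ _ (mem_univ v), hvc]
  have hlt2 : nn b < nn (c v) := lt_of_le_of_lt hb hlt
  have : f c' < f c := by omega
  exact absurd (hmin c' (mem_univ _)) (not_le.2 this)
end

section
/- Let G be a graph with a bipartizing matching M, and let D be a diamond subgraph of G (a K₄ minus one edge) with vertices u, v₁, v₂, v₃ where u and v₂ are the two vertices of degree 3 in D. Then M matches both u and v₂ (each is an endpoint of some edge of M). -/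
lemma triangle_matched {V : Type*} (G M : SimpleGraph V)
    (hC : (G \ M).Colorable 2) (a b c : V)
    (hab : G.Adj a b) (hbc : G.Adj b c) (hac : G.Adj a c) :
    M.Adj a b ∨ M.Adj b c ∨ M.Adj a c := by
  by_contra h
  push_neg at h
  obtain ⟨h1, h2, h3⟩ := h
  obtain ⟨C⟩ := hC
  have d1 : C a ≠ C b := C.valid ⟨hab, h1⟩
  have d2 : C b ≠ C c := C.valid ⟨hbc, h2⟩
  have d3 : C a ≠ C c := C.valid ⟨hac, h3⟩
  have : (C a).val ≠ (C b).val := fun h => d1 (Fin.ext h)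
  have : (C b).val ≠ (C c).val := fun h => d2 (Fin.ext h)
  have : (C a).val ≠ (C c).val := fun h => d3 (Fin.ext h)
  have ha := (C a).isLt
  have hb := (C b).isLt
  have hc := (C c).isLt
  omega

/-- In any bipartizing matching `M`, both degree-3 vertices of a diamond subgraph are matched. -/
theorem bm_matches_diamond_apexes {V : Type*} (G M : SimpleGraph V)
    (hM : IsBipartizingMatching G M) (u v₁ v₂ v₃ : V)
    (h12 : v₁ ≠ v₂) (h13 : v₁ ≠ v₃) (h23 : v₂ ≠ v₃)
    (hu1 : u ≠ v₁) (hu2 : u ≠ v₂) (hu3 : u ≠ v₃)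
    (e1 : G.Adj u v₁) (e2 : G.Adj u v₂) (e3 : G.Adj u v₃)
    (e4 : G.Adj v₁ v₂) (e5 : G.Adj v₂ v₃) :
    (∃ a, M.Adj u a) ∧ (∃ b, M.Adj v₂ b) := by
  obtain ⟨hle, hmatch, hC⟩ := hM
  have t1 := triangle_matched G M hC u v₁ v₂ e1 e4 e2
  have t2 := triangle_matched G M hC u v₂ v₃ e2 e5 e3
  rcases t1 with m1 | m1 | m1
  · rcases t2 with m2 | m2 | m2
    · exact ⟨⟨v₁, m1⟩, ⟨u, m2.symm⟩⟩
    · exact ⟨⟨v₁, m1⟩, ⟨v₃, m2⟩⟩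
    · -- M.Adj u v₁ and M.Adj u v₃ : contradiction
      exact absurd (hmatch u v₁ v₃ m1 m2) h13
  · -- M.Adj v₁ v₂
    rcases t2 with m2 | m2 | m2
    · exact absurd (hmatch v₂ v₁ u m1.symm m2.symm) (fun h => hu1 h.symm)
    · exact absurd (hmatch v₂ v₁ v₃ m1.symm m2) h13
    · exact ⟨⟨v₃, m2⟩, ⟨v₁, m1.symm⟩⟩
  · -- M.Adj u v₂
    exact ⟨⟨v₂, m1⟩, ⟨u, m1.symm⟩⟩
end

section
/- If a graph G admits a bipartizing matching, then for every vertex v of G, the induced subgraph G[N(v)] on the neighborhood of v does not contain two vertex-disjoint paths on 3 vertices. -/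
private lemma triangle_edge {V : Type*} {G M : SimpleGraph V}
    (C : (G \ M).Coloring (Fin 2)) {x y z : V}
    (hxy : G.Adj x y) (hyz : G.Adj y z) (hxz : G.Adj x z) :
    M.Adj x y ∨ M.Adj y z ∨ M.Adj x z := by
  by_contra h
  push_neg at h
  obtain ⟨h1, h2, h3⟩ := h
  have v1 := C.valid (G.sdiff_adj M x y |>.mpr ⟨hxy, h1⟩)
  have v2 := C.valid (G.sdiff_adj M y z |>.mpr ⟨hyz, h2⟩)
  have v3 := C.valid (G.sdiff_adj M x z |>.mpr ⟨hxz, h3⟩)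
  have : ∀ a b c : Fin 2, a ≠ b → b ≠ c → a ≠ c → False := by decide
  exact this _ _ _ v1 v2 v3

private lemma fan_edge {V : Type*} {G M : SimpleGraph V}
    (C : (G \ M).Coloring (Fin 2))
    (hmatch : ∀ v u w : V, M.Adj v u → M.Adj v w → u = w)
    {v a₁ a₂ a₃ : V} (h1 : G.Adj v a₁) (h2 : G.Adj v a₂) (h3 : G.Adj v a₃)
    (h12 : G.Adj a₁ a₂) (h23 : G.Adj a₂ a₃) (h13 : a₁ ≠ a₃) :
    M.Adj v a₁ ∨ M.Adj v a₂ ∨ M.Adj v a₃ := by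
  rcases triangle_edge C h1 h12 h2 with h | h | h
  · exact Or.inl h
  · -- a₂a₁ ∈ M
    rcases triangle_edge C h2 h23 h3 with h' | h' | h'
    · exact Or.inr (Or.inl h')
    · exact absurd (hmatch a₂ a₁ a₃ h.symm h') h13
    · exact Or.inr (Or.inr h')
  · exact Or.inr (Or.inl h)

/-- If `G` has a bipartizing matching, then no neighborhood contains two vertex-disjoint `P₃`'s. -/
theorem bm_no_two_disjoint_P3_in_neighborhood {V : Type*} (G : SimpleGraph V)
    (hG : ∃ M, IsBipartizingMatching G M) (v : V) :
    ¬ ∃ a₁ a₂ a₃ b₁ b₂ b₃ : V,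
      ([a₁, a₂, a₃, b₁, b₂, b₃] : List V).Nodup ∧
      (∀ x ∈ ([a₁, a₂, a₃, b₁, b₂, b₃] : List V), G.Adj v x) ∧
      G.Adj a₁ a₂ ∧ G.Adj a₂ a₃ ∧ G.Adj b₁ b₂ ∧ G.Adj b₂ b₃ := by
  rintro ⟨a₁, a₂, a₃, b₁, b₂, b₃, hnd, hadj, h12, h23, h45, h56⟩
  obtain ⟨M, hle, hmatch, ⟨C⟩⟩ := hG
  simp [List.nodup_cons] at hnd
  have ha1 := hadj a₁ (by simp)
  have ha2 := hadj a₂ (by simp)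
  have ha3 := hadj a₃ (by simp)
  have hb1 := hadj b₁ (by simp)
  have hb2 := hadj b₂ (by simp)
  have hb3 := hadj b₃ (by simp)
  have hA := fan_edge C hmatch ha1 ha2 ha3 h12 h23 (by tauto)
  have hB := fan_edge C hmatch hb1 hb2 hb3 h45 h56 (by tauto)
  rcases hA with h | h | h <;> rcases hB with h' | h' | h' <;>
    exact absurd (hmatch v _ _ h h') (by tauto)
end

section
/- If a graph G admits a bipartizing matching, then G does not contain the wheel W_k as a subgraph for any k ≥ 4. -/
/-- If `G` has a bipartizing matching, then `G` contains no wheel `W_k` (`k ≥ 4`) as a subgraph. -/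
theorem bm_no_wheel {V : Type*} (G : SimpleGraph V)
    (hG : ∃ M, IsBipartizingMatching G M) (k : ℕ) (hk : 4 ≤ k) :
    ¬ ∃ (c : V) (f : Fin k → V), Function.Injective f ∧ (∀ i, c ≠ f i) ∧
      (∀ i : Fin k, G.Adj c (f i)) ∧
      (∀ i : Fin k, G.Adj (f i) (f ⟨(i.val + 1) % k, Nat.mod_lt _ (by omega)⟩)) := by
  rintro ⟨c, f, hinj, hne, hspoke, hrim⟩
  obtain ⟨M, hMG, hMatch, hCol⟩ := hG
  obtain ⟨C⟩ := hCol
  have hmodne : ∀ a d : ℕ, a < k → 1 ≤ d → d < k → (a + d) % k ≠ a := by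
    intro a d ha hd1 hd2
    rcases lt_or_ge (a + d) k with h | h
    · rw [Nat.mod_eq_of_lt h]; omega
    · rw [Nat.mod_eq_sub_mod h, Nat.mod_eq_of_lt (by omega)]; omega
  set s : Fin k → Fin k := fun i => ⟨(i.val + 1) % k, Nat.mod_lt _ (by omega)⟩ with hs
  have hsval : ∀ i : Fin k, (s i).val = (i.val + 1) % k := fun i => rfl
  have hrim' : ∀ i, G.Adj (f i) (f (s i)) := hrim
  have hM : ∀ u w, G.Adj u w → C u = C w → M.Adj u w := by
    intro u w huw hcuw
    by_contra hnm
    exact C.valid ((G.sdiff_adj M u w).mpr ⟨huw, hnm⟩) hcuw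
  have hbadM : ∀ i, C (f i) = C c → M.Adj c (f i) := fun i h => hM c (f i) (hspoke i) h.symm
  have huniq : ∀ i j, C (f i) = C c → C (f j) = C c → i = j :=
    fun i j hi hj => hinj (hMatch c (f i) (f j) (hbadM i hi) (hbadM j hj))
  have key : ∃ i : Fin k, C (f i) ≠ C c ∧ C (f (s i)) ≠ C c ∧ C (f (s (s i))) ≠ C c := by
    by_cases hb : ∃ j, C (f j) = C c
    · obtain ⟨j, hj⟩ := hb
      refine ⟨s j, ?_, ?_, ?_⟩
      · intro h
        have := congrArg Fin.val (huniq _ _ h hj)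
        simp only [hsval, Nat.mod_add_mod] at this
        exact hmodne j.val 1 j.isLt le_rfl (by omega) this
      · intro h
        have := congrArg Fin.val (huniq _ _ h hj)
        simp only [hsval, Nat.mod_add_mod] at this
        exact hmodne j.val 2 j.isLt (by omega) (by omega) this
      · intro h
        have := congrArg Fin.val (huniq _ _ h hj)
        simp only [hsval, Nat.mod_add_mod] at this
        exact hmodne j.val 3 j.isLt (by omega) (by omega) this
    · push_neg at hb
      exact ⟨⟨0, by omega⟩, hb _, hb _, hb _⟩
  obtain ⟨i, h0, h1, h2⟩ := key
  have htwo : ∀ a b x : Fin 2, a ≠ x → b ≠ x → a = b := by decide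
  have e1 : M.Adj (f i) (f (s i)) := hM _ _ (hrim' i) (htwo _ _ _ h0 h1)
  have e2 : M.Adj (f (s i)) (f (s (s i))) := hM _ _ (hrim' (s i)) (htwo _ _ _ h1 h2)
  have hfeq : f i = f (s (s i)) := hMatch (f (s i)) (f i) (f (s (s i))) e1.symm e2
  have hiv := congrArg Fin.val (hinj hfeq)
  simp only [hsval, Nat.mod_add_mod] at hiv
  exact hmodne i.val 2 i.isLt (by omega) (by omega) hiv.symm
end

section
/- For every odd k ≥ 3, the odd k-pool does not admit a bipartizing matching; consequently, no graph containing an odd k-pool as a subgraph admits a bipartizing matching. -/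
/-- The `k`-pool: internal cycle on `Sum.inl i` (`i : Fin k`), border `Sum.inr i`
adjacent to `Sum.inl i` and `Sum.inl ((i+1) % k)`. -/
def kPool (k : ℕ) : SimpleGraph (Fin k ⊕ Fin k) :=
  SimpleGraph.fromRel (fun a b =>
    match a, b with
    | Sum.inl i, Sum.inl j => j.val = (i.val + 1) % k
    | Sum.inl i, Sum.inr j => i.val = j.val ∨ i.val = (j.val + 1) % k
    | _, _ => False)

open SimpleGraph Sum
open Fin.NatCast Fin.CommRing

section helpers
variable {k : ℕ} [NeZero k]

lemma vone (hk : 3 ≤ k) : (1 : Fin k).val = 1 := by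
  rw [Fin.val_one', Nat.mod_eq_of_lt (by omega)]

lemma val_add_one (hk : 3 ≤ k) (i : Fin k) : (i + 1).val = (i.val + 1) % k := by
  rw [Fin.val_add, vone hk]

lemma one_ne (hk : 3 ≤ k) : (1 : Fin k) ≠ 0 := by
  intro h; have := congrArg Fin.val h; rw [vone hk] at this; simp at this

lemma two_ne (hk : 3 ≤ k) : (1 + 1 : Fin k) ≠ 0 := by
  intro h; have := congrArg Fin.val h
  rw [Fin.val_add, vone hk, Nat.mod_eq_of_lt (by omega)] at this
  simp at this

lemma ne1 (hk : 3 ≤ k) (i : Fin k) : i ≠ i + 1 := fun h => one_ne hk (left_eq_add.mp h)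

lemma ne2 (hk : 3 ≤ k) (i : Fin k) : i ≠ i + 1 + 1 := fun h => two_ne hk
  (left_eq_add.mp (by rwa [add_assoc] at h))

lemma adjPP (hk : 3 ≤ k) (i : Fin k) : (kPool k).Adj (inl i) (inl (i+1)) := by
  simp only [kPool, fromRel_adj]
  exact ⟨by simpa using ne1 hk i, Or.inl (val_add_one hk i)⟩

omit [NeZero k] in
lemma adjPB (i : Fin k) : (kPool k).Adj (inl i) (inr i) := by
  simp only [kPool, fromRel_adj]; tauto

lemma adjPB' (hk : 3 ≤ k) (i : Fin k) : (kPool k).Adj (inl (i+1)) (inr i) := by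
  simp only [kPool, fromRel_adj]
  exact ⟨by simp, Or.inl (Or.inr (val_add_one hk i))⟩

end helpers

/-- For every odd `k ≥ 3`, the `k`-pool has no bipartizing matching; consequently no
graph containing the `k`-pool as a subgraph has one. -/
theorem odd_pool_no_bm (k : ℕ) (hk : 3 ≤ k) (hodd : Odd k) :
    (¬ ∃ M, IsBipartizingMatching (kPool k) M) ∧
    (∀ (V : Type) (G : SimpleGraph V) (f : kPool k →g G), Function.Injective f →
      ¬ ∃ M, IsBipartizingMatching G M) := by
  have hNZ : NeZero k := ⟨by omega⟩
  have part1 : ¬ ∃ M, IsBipartizingMatching (kPool k) M := by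
    rintro ⟨M, hMG, hmatch, hcol⟩
    obtain ⟨C⟩ := hcol
    have mono : ∀ u v, (kPool k).Adj u v → C u = C v → M.Adj u v := by
      intro u v ha hc
      by_contra hm
      exact C.valid ((SimpleGraph.sdiff_adj _ _ _ _).mpr ⟨ha, hm⟩) hc
    have fin2 : ∀ a b d : Fin 2, a ≠ b → d = a ∨ d = b := by decide
    have step : ∀ (j : Fin k) (w : Fin k ⊕ Fin k), M.Adj (inl (j+1)) w →
        w ≠ inl (j+1+1) → w ≠ inr (j+1) → M.Adj (inl (j+1+1)) (inr (j+1)) := by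
      intro j w hw h1 h2
      by_cases hc : C (inl (j+1)) = C (inl (j+1+1))
      · exact absurd (hmatch _ _ _ hw (mono _ _ (adjPP hk (j+1)) hc)) h1
      · rcases fin2 _ _ (C (inr (j+1))) hc with hb | hb
        · exact absurd (hmatch _ _ _ hw (mono _ _ (adjPB (j+1)) hb.symm)) h2
        · exact mono _ _ (adjPB' hk (j+1)) hb.symm
    have exI : ∃ i : Fin k, C (inl i) = C (inl (i+1)) := by
      by_contra h
      push_neg at h
      have fin2' : ∀ a b : Fin 2, a ≠ b → b = a + 1 := by decide
      have key : ∀ n : ℕ, C (inl (n : Fin k)) = C (inl 0) + (n : Fin 2) := by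
        intro n; induction n with
        | zero => simp
        | succ n ih =>
          have h1 : ((n+1 : ℕ) : Fin k) = (n : Fin k) + 1 := by push_cast; ring
          have h2 : ((n+1 : ℕ) : Fin 2) = (n : Fin 2) + 1 := by push_cast; ring
          rw [h1, h2, fin2' _ _ (h ((n : Fin k))), ih, add_assoc]
      have hk2 := key k
      rw [Fin.natCast_self] at hk2
      obtain ⟨m, hm⟩ := hodd
      have hone : (k : Fin 2) = 1 := by
        subst hm; push_cast
        simp
      rw [hone] at hk2
      exact (by decide : ∀ a : Fin 2, a ≠ a + 1) _ hk2
    obtain ⟨i₀, hi₀⟩ := exI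
    have hbase : M.Adj (inl (i₀+1)) (inl i₀) := (mono _ _ (adjPP hk i₀) hi₀).symm
    have chain : ∀ n : ℕ, M.Adj (inl (i₀ + (n:Fin k) + 1 + 1)) (inr (i₀ + (n:Fin k) + 1)) := by
      intro n; induction n with
      | zero =>
        simp only [Nat.cast_zero, add_zero]
        refine step i₀ (inl i₀) hbase ?_ (by simp)
        simpa using ne2 hk i₀
      | succ n ih =>
        have h1 : (((n+1:ℕ)) : Fin k) = (n : Fin k) + 1 := by push_cast; ring
        rw [h1]
        have := step (i₀ + (n:Fin k) + 1) (inr (i₀ + (n:Fin k) + 1)) ih (by simp)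
          (by simpa using ne1 hk (i₀ + (n:Fin k) + 1))
        convert this using 3 <;> ring
    have hfin := chain (k-1)
    have hcast : ((k-1 : ℕ) : Fin k) + 1 = 0 := by
      have h1 : ((k-1:ℕ) : Fin k) + 1 = ((k-1+1 : ℕ) : Fin k) := by push_cast; ring
      rw [h1, show k-1+1 = k by omega, Fin.natCast_self]
    have e1 : i₀ + ((k-1:ℕ) : Fin k) + 1 = i₀ := by rw [add_assoc, hcast, add_zero]
    rw [e1] at hfin
    exact (by simp : (inl i₀ : Fin k ⊕ Fin k) ≠ inr i₀) (hmatch _ _ _ hbase hfin)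
  refine ⟨part1, ?_⟩
  rintro V G f hf ⟨M, hMG, hmatch, hcol⟩
  obtain ⟨C⟩ := hcol
  refine part1 ⟨⟨fun u v => (kPool k).Adj u v ∧ M.Adj (f u) (f v),
    ⟨fun u v h => ⟨h.1.symm, h.2.symm⟩⟩, ⟨fun u h => (kPool k).loopless.irrefl u h.1⟩⟩,
    fun u v h => h.1, fun v u w h1 h2 => hf (hmatch _ _ _ h1.2 h2.2), ?_⟩
  refine ⟨SimpleGraph.Coloring.mk (fun v => C (f v)) ?_⟩
  intro u v huv
  rw [SimpleGraph.sdiff_adj] at huv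
  obtain ⟨hp, hnm⟩ := huv
  exact C.valid ((SimpleGraph.sdiff_adj _ _ _ _).mpr ⟨f.map_adj hp, fun hm => hnm ⟨hp, hm⟩⟩)
end

section
/- Let G be an odd k-pool (k odd, k ≥ 3) with internal cycle C = p₁p₂…p_kp₁, and let b be the border with neighbors p₁ and p_k. Then every bipartizing matching M of G − b contains exactly one edge of C, and moreover p₁p_k ∉ M. -/
set_option linter.unusedSectionVars false

section Aux
variable (k : ℕ) (hk : 3 ≤ k)
include hk

lemma pV_lt : k - 1 < k := by omega

def pV : Type := {x : Fin k ⊕ Fin k // x ≠ Sum.inr ⟨k - 1, pV_lt k hk⟩}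

lemma pP_pos : 0 < k := by omega

def pP (i : ℕ) : pV k hk := ⟨Sum.inl ⟨i % k, Nat.mod_lt _ (pP_pos k hk)⟩, by simp⟩

def pB (i : ℕ) : pV k hk :=
  ⟨Sum.inr ⟨i % (k - 1), by have := Nat.mod_lt i (show 0 < k - 1 by omega); omega⟩, by
    intro h
    rw [Sum.inr.injEq, Fin.mk.injEq] at h
    have := Nat.mod_lt i (show 0 < k - 1 by omega); omega⟩

def pH : SimpleGraph (pV k hk) :=
  (kPool k).induce {x : Fin k ⊕ Fin k | x ≠ Sum.inr ⟨k - 1, pV_lt k hk⟩}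

lemma kPool_adj_ll (i j : Fin k) : (kPool k).Adj (Sum.inl i) (Sum.inl j) ↔
    (Sum.inl i : Fin k ⊕ Fin k) ≠ Sum.inl j ∧ (j.val = (i.val + 1) % k ∨ i.val = (j.val + 1) % k) := by
  rw [kPool, SimpleGraph.fromRel_adj]

lemma kPool_adj_rl (i j : Fin k) : (kPool k).Adj (Sum.inr j) (Sum.inl i) ↔
    (Sum.inr j : Fin k ⊕ Fin k) ≠ Sum.inl i ∧ (i.val = j.val ∨ i.val = (j.val + 1) % k) := by
  rw [kPool, SimpleGraph.fromRel_adj]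
  tauto

lemma pP_inj {i j : ℕ} (h : pP k hk i = pP k hk j) : i % k = j % k := by
  have := congrArg Subtype.val h
  simpa [pP] using this

lemma pB_ne_pP (i j : ℕ) : pB k hk i ≠ pP k hk j := by
  intro h
  exact absurd (congrArg Subtype.val h) (by simp [pB, pP])

lemma pB_inj {i j : ℕ} (h : pB k hk i = pB k hk j) : i % (k - 1) = j % (k - 1) := by
  have := congrArg Subtype.val h
  simpa [pB] using this

lemma succ_mod (i : ℕ) : (i + 1) % k = (i % k + 1) % k := by
  conv_lhs => rw [Nat.add_mod, Nat.mod_eq_of_lt (show 1 < k by omega)]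

lemma pH_adj (x y : pV k hk) : (pH k hk).Adj x y ↔ (kPool k).Adj x.1 y.1 := Iff.rfl

lemma H_PP (i : ℕ) : (pH k hk).Adj (pP k hk i) (pP k hk (i + 1)) := by
  rw [pH_adj k hk]
  simp only [pP]
  rw [kPool_adj_ll k hk]
  have h1 := succ_mod k hk i
  have ha : i % k < k := Nat.mod_lt _ (by omega)
  constructor
  · intro h
    rw [Sum.inl.injEq, Fin.mk.injEq] at h
    rw [h1] at h
    rcases Nat.lt_or_ge (i % k + 1) k with h2 | h2
    · rw [Nat.mod_eq_of_lt h2] at h; omega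
    · have : i % k + 1 = k := by omega
      rw [this, Nat.mod_self] at h; omega
  · exact Or.inl h1

lemma H_BP1 (i : ℕ) (hi : i < k - 1) : (pH k hk).Adj (pB k hk i) (pP k hk i) := by
  rw [pH_adj k hk]
  simp only [pP, pB]
  rw [kPool_adj_rl k hk]
  refine ⟨by simp, Or.inl ?_⟩
  simp only
  rw [Nat.mod_eq_of_lt hi, Nat.mod_eq_of_lt (show i < k by omega)]

lemma H_BP2 (i : ℕ) (hi : i < k - 1) : (pH k hk).Adj (pB k hk i) (pP k hk (i + 1)) := by
  rw [pH_adj k hk]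
  simp only [pP, pB]
  rw [kPool_adj_rl k hk]
  refine ⟨by simp, Or.inr ?_⟩
  simp only
  rw [Nat.mod_eq_of_lt hi]

lemma pP_cycle : pP k hk k = pP k hk 0 := by
  apply Subtype.ext
  simp [pP]

end Aux

/-- Deleting the border `b = b_k` (adjacent to `p_k` and `p₁`) from an odd `k`-pool,
every bipartizing matching of the resulting graph contains exactly one edge of the
internal cycle, and this edge is not `p₁ p_k`. -/
theorem pool_minus_border_bm (k : ℕ) (hk : 3 ≤ k) (hodd : Odd k)
    (M : SimpleGraph {x : Fin k ⊕ Fin k // x ≠ Sum.inr ⟨k - 1, by omega⟩})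
    (hM : IsBipartizingMatching
      ((kPool k).induce {x : Fin k ⊕ Fin k | x ≠ Sum.inr ⟨k - 1, by omega⟩}) M) :
    (∃! i : Fin k,
      M.Adj ⟨Sum.inl i, by simp⟩ ⟨Sum.inl ⟨(i.val + 1) % k, Nat.mod_lt _ (by omega)⟩, by simp⟩) ∧
    ¬ M.Adj ⟨Sum.inl ⟨0, by omega⟩, by simp⟩ ⟨Sum.inl ⟨k - 1, by omega⟩, by simp⟩ := by
  obtain ⟨hle, hmat, hcol⟩ := hM
  obtain ⟨c⟩ := hcol
  -- colors differ across non-matching edges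
  have hcval : ∀ x y : pV k hk, (pH k hk).Adj x y → ¬ M.Adj x y → c x ≠ c y := by
    intro x y ha hm
    exact c.valid ((SimpleGraph.sdiff_adj _ _ _ _).mpr ⟨ha, hm⟩)
  have vne : ∀ {a b : Fin 2}, a ≠ b → a.val ≠ b.val := fun h h' => h (Fin.ext h')
  -- each triangle contains a matching edge
  have tri : ∀ i, i < k - 1 → M.Adj (pP k hk i) (pP k hk (i + 1)) ∨
      M.Adj (pB k hk i) (pP k hk i) ∨ M.Adj (pB k hk i) (pP k hk (i + 1)) := by
    intro i hi
    by_contra hcon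
    push_neg at hcon
    obtain ⟨h1, h2, h3⟩ := hcon
    have d1 := vne (hcval _ _ (H_PP k hk i) h1)
    have d2 := vne (hcval _ _ (H_BP1 k hk i hi) h2)
    have d3 := vne (hcval _ _ (H_BP2 k hk i hi) h3)
    have e1 : (c (pP k hk i)).val < 2 := (c _).isLt
    have e2 : (c (pP k hk (i + 1))).val < 2 := (c _).isLt
    have e3 : (c (pB k hk i)).val < 2 := (c _).isLt
    omega
  -- chain propagation
  have step : ∀ m, m + 1 < k - 1 → M.Adj (pB k hk m) (pP k hk (m + 1)) →
      M.Adj (pB k hk (m + 1)) (pP k hk (m + 2)) := by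
    intro m hm hS
    rcases tri (m + 1) hm with h | h | h
    · exfalso
      have heq := hmat _ _ _ h hS.symm
      exact pB_ne_pP k hk m (m + 2) heq.symm
    · exfalso
      have heq := hmat _ _ _ h.symm hS.symm
      have := pB_inj k hk heq
      rw [Nat.mod_eq_of_lt (show m + 1 < k - 1 by omega),
        Nat.mod_eq_of_lt (show m < k - 1 by omega)] at this
      omega
    · exact h
  have chain : ∀ d m, m + d + 1 ≤ k - 1 → M.Adj (pB k hk m) (pP k hk (m + 1)) →
      M.Adj (pB k hk (m + d)) (pP k hk (m + d + 1)) := by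
    intro d
    induction d with
    | zero => intro m _ h; exact h
    | succ n ih =>
      intro m hb h
      have h1 := ih m (by omega) h
      have h2 := step (m + n) (by omega) h1
      have e1 : m + n + 1 = m + (n + 1) := by omega
      have e2 : m + n + 2 = m + (n + 1) + 1 := by omega
      rwa [e1, e2] at h2
  -- the edge p0 p(k-1) is not in M
  have no_last : ¬ M.Adj (pP k hk 0) (pP k hk (k - 1)) := by
    intro h0
    rcases tri 0 (by omega) with h | h | h
    · have heq := pP_inj k hk (hmat _ _ _ h0 h)
      rw [Nat.mod_eq_of_lt (show k - 1 < k by omega),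
        Nat.mod_eq_of_lt (show 1 < k by omega)] at heq
      omega
    · exact pB_ne_pP k hk 0 (k - 1) (hmat _ _ _ h.symm h0)
    · have hend := chain (k - 2) 0 (by omega) h
      rw [show (0 : ℕ) + (k - 2) = k - 2 by omega, show k - 2 + 1 = k - 1 by omega] at hend
      exact pB_ne_pP k hk (k - 2) 0 (hmat _ _ _ hend.symm h0.symm)
  -- at most one cycle edge
  have key : ∀ i j, i < j → j < k - 1 → M.Adj (pP k hk i) (pP k hk (i + 1)) →
      M.Adj (pP k hk j) (pP k hk (j + 1)) → False := by
    intro i j hij hj hi hjM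
    rcases Nat.lt_or_ge (i + 1) j with h2 | h2
    · rcases tri (i + 1) (by omega) with h | h | h
      · have heq := pP_inj k hk (hmat _ _ _ hi.symm h)
        rw [Nat.mod_eq_of_lt (show i < k by omega),
          Nat.mod_eq_of_lt (show i + 2 < k by omega)] at heq
        omega
      · exact pB_ne_pP k hk (i + 1) i (hmat _ _ _ h.symm hi.symm).symm.symm
      · have hend := chain (j - i - 2) (i + 1) (by omega) h
        rw [show i + 1 + (j - i - 2) = j - 1 by omega, show j - 1 + 1 = j by omega] at hend
        exact pB_ne_pP k hk (j - 1) (j + 1) (hmat _ _ _ hend.symm hjM)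
    · -- j = i + 1
      have hj1 : j = i + 1 := by omega
      subst hj1
      have heq := pP_inj k hk (hmat _ _ _ hi.symm hjM)
      rw [Nat.mod_eq_of_lt (show i < k by omega),
        Nat.mod_eq_of_lt (show i + 1 + 1 < k by omega)] at heq
      omega
  -- at least one cycle edge
  have exists_one : ∃ i, i < k - 1 ∧ M.Adj (pP k hk i) (pP k hk (i + 1)) := by
    by_contra hno
    push_neg at hno
    have alt : ∀ i, i ≤ k - 1 → (c (pP k hk i)).val % 2 = ((c (pP k hk 0)).val + i) % 2 := by
      intro i
      induction i with
      | zero => intro _; simp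
      | succ n ih =>
        intro hn
        have h1 := ih (by omega)
        have hne := vne (hcval _ _ (H_PP k hk n) (hno n (by omega)))
        have e1 : (c (pP k hk n)).val < 2 := (c _).isLt
        have e2 : (c (pP k hk (n + 1))).val < 2 := (c _).isLt
        omega
    have h1 := alt (k - 1) le_rfl
    have hadj := H_PP k hk (k - 1)
    rw [show k - 1 + 1 = k by omega, pP_cycle k hk] at hadj
    have hne := vne (hcval _ _ hadj (fun hm => no_last hm.symm))
    have e1 : (c (pP k hk (k - 1))).val < 2 := (c _).isLt
    have e2 : (c (pP k hk 0)).val < 2 := (c _).isLt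
    obtain ⟨t, ht⟩ := hodd
    omega
  obtain ⟨i, hik, hiM⟩ := exists_one
  -- translation between statement vertices and pP
  have eP : ∀ (j : ℕ) (hj : j < k) (pf : (Sum.inl ⟨j, hj⟩ : Fin k ⊕ Fin k) ≠ Sum.inr ⟨k - 1, by omega⟩), (⟨Sum.inl ⟨j, hj⟩, pf⟩ :
      {x : Fin k ⊕ Fin k // x ≠ Sum.inr ⟨k - 1, by omega⟩}) = pP k hk j := by
    intro j hj pf
    apply Subtype.ext
    simp [pP, Nat.mod_eq_of_lt hj]
  have eQ : ∀ (j : ℕ) (pf : (Sum.inl ⟨(j + 1) % k, Nat.mod_lt _ (by omega)⟩ : Fin k ⊕ Fin k) ≠ Sum.inr ⟨k - 1, by omega⟩), (⟨Sum.inl ⟨(j + 1) % k, Nat.mod_lt _ (by omega)⟩, pf⟩ :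
      {x : Fin k ⊕ Fin k // x ≠ Sum.inr ⟨k - 1, by omega⟩}) = pP k hk (j + 1) := by
    intro j pf
    apply Subtype.ext
    rfl
  constructor
  · refine ⟨⟨i, by omega⟩, ?_, ?_⟩
    · show M.Adj _ _
      rw [eP i (by omega), eQ i]
      exact hiM
    · intro j hj
      rw [eP j.val j.isLt, eQ j.val] at hj
      by_cases hjk : j.val < k - 1
      · have := key -- use at-most-one
        apply Fin.ext
        show j.val = i
        rcases Nat.lt_trichotomy j.val i with h | h | h
        · exact (key j.val i h hik hj hiM).elim
        · exact h
        · exact (key i j.val h hjk hiM hj).elim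
      · -- j.val = k - 1 : contradiction with no_last
        exfalso
        have hjv : j.val = k - 1 := by omega
        rw [hjv] at hj
        rw [show k - 1 + 1 = k by omega, pP_cycle k hk] at hj
        exact no_last hj.symm
  · intro h
    rw [eP 0 (by omega), eP (k - 1) (by omega)] at h
    exact no_last h
end

section
/- If a connected P₅-free graph G admits a bipartizing matching, then G has a dominating set of size at most 4. -/
set_option linter.unusedSectionVars false

namespace P5BMaux

open SimpleGraph Finset

variable {V : Type*} [Fintype V] [DecidableEq V] {G : SimpleGraph V}

lemma getVert_mem_support {u v : V} (w : G.Walk u v) (n : ℕ) : w.getVert n ∈ w.support := by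
  induction w generalizing n with
  | nil => simp [SimpleGraph.Walk.getVert]
  | cons h q ih =>
    cases n with
    | zero => simp
    | succ n =>
      rw [SimpleGraph.Walk.getVert_cons_succ, SimpleGraph.Walk.support_cons]
      exact List.mem_cons_of_mem _ (ih n)

lemma length_drop {u v : V} (p : G.Walk u v) (n : ℕ) :
    (p.drop n).length = p.length - n := by
  induction p generalizing n with
  | nil => cases n <;> simp [SimpleGraph.Walk.drop]
  | cons h q ih =>
    cases n with
    | zero => simp [SimpleGraph.Walk.drop]
    | succ n => simp [SimpleGraph.Walk.drop, ih]

lemma support_drop_subset {u v : V} (p : G.Walk u v) (n : ℕ) :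
    ∀ a ∈ (p.drop n).support, a ∈ p.support := by
  induction p generalizing n with
  | nil => intro a ha; simpa [SimpleGraph.Walk.drop] using ha
  | cons h q ih =>
    cases n with
    | zero => intro a ha; simpa [SimpleGraph.Walk.drop] using ha
    | succ n =>
      intro a ha
      simp only [SimpleGraph.Walk.drop, SimpleGraph.Walk.support_copy] at ha
      rw [SimpleGraph.Walk.support_cons]
      exact List.mem_cons_of_mem _ (ih n a ha)

lemma eq_of_walk_length_zero {u v : V} (w : G.Walk u v) (h : w.length = 0) : u = v := by
  have h1 := w.getVert_zero
  have h2 := w.getVert_length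
  rw [h] at h2
  rw [← h1, h2]

lemma p5false
    (hP5 : ¬ ∃ f : Fin 5 → V, Function.Injective f ∧
      ∀ i j : Fin 5, G.Adj (f i) (f j) ↔ (i.val + 1 = j.val ∨ j.val + 1 = i.val))
    {a b c d e : V}
    (hab : G.Adj a b) (hbc : G.Adj b c) (hcd : G.Adj c d) (hde : G.Adj d e)
    (hac : ¬ G.Adj a c) (had : ¬ G.Adj a d) (hae : ¬ G.Adj a e)
    (hbd : ¬ G.Adj b d) (hbe : ¬ G.Adj b e) (hce : ¬ G.Adj c e)
    (nac : a ≠ c) (nad : a ≠ d) (nae : a ≠ e) (nbd : b ≠ d) (nbe : b ≠ e) (nce : c ≠ e) :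
    False := by
  have nab : a ≠ b := hab.ne
  have nbc : b ≠ c := hbc.ne
  have ncd : c ≠ d := hcd.ne
  have nde : d ≠ e := hde.ne
  apply hP5
  refine ⟨![a,b,c,d,e], ?_, ?_⟩
  · intro i j hij
    fin_cases i <;> fin_cases j <;>
      simp only [Matrix.cons_val_zero, Matrix.cons_val_one, Matrix.cons_val_two,
        Matrix.cons_val_three, Matrix.cons_val_four, Matrix.head_cons, Matrix.vecTail,
        Matrix.vecHead, Function.comp] at hij <;>
      first
        | rfl
        | (exact absurd hij (by assumption))
        | (exact absurd hij (Ne.symm (by assumption)))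
  · intro i j
    fin_cases i <;> fin_cases j <;>
      simp only [Matrix.cons_val_zero, Matrix.cons_val_one, Matrix.cons_val_two,
        Matrix.cons_val_three, Matrix.cons_val_four, Matrix.head_cons, Matrix.vecTail,
        Matrix.vecHead, Function.comp] <;>
      first
        | (exact iff_of_false G.irrefl (by decide))
        | (exact iff_of_true (by assumption) (by decide))
        | (exact iff_of_true (SimpleGraph.Adj.symm (by assumption)) (by decide))
        | (exact iff_of_false (by assumption) (by decide))
        | (exact iff_of_false (fun h => absurd h.symm (by assumption)) (by decide))

/-- Every vertex outside `S` has a neighbour in `S`. -/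
def Dom (G : SimpleGraph V) (S : Finset V) : Prop := ∀ v, v ∉ S → ∃ u ∈ S, G.Adj v u

/-- Any two vertices of `S` are joined by a walk staying inside `S`. -/
def XConn (G : SimpleGraph V) (S : Finset V) : Prop :=
  ∀ u ∈ S, ∀ v ∈ S, ∃ w : G.Walk u v, ∀ a ∈ w.support, a ∈ S

/-- Connected dominating set. -/
def CDS (G : SimpleGraph V) (S : Finset V) : Prop := S.Nonempty ∧ Dom G S ∧ XConn G S

/-- Length of a shortest walk from `u` to `v` staying inside `S`. -/
noncomputable def dX (G : SimpleGraph V) (S : Finset V) (u v : V) : ℕ :=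
  sInf {n | ∃ w : G.Walk u v, (∀ a ∈ w.support, a ∈ S) ∧ w.length = n}

lemma dX_le {S : Finset V} {u v : V} (w : G.Walk u v) (hw : ∀ a ∈ w.support, a ∈ S) :
    dX G S u v ≤ w.length :=
  Nat.sInf_le ⟨w, hw, rfl⟩

lemma exists_shortest {S : Finset V} {u v : V} (w0 : G.Walk u v)
    (hw0 : ∀ a ∈ w0.support, a ∈ S) :
    ∃ w : G.Walk u v, (∀ a ∈ w.support, a ∈ S) ∧ w.length = dX G S u v :=
  Nat.sInf_mem (⟨w0.length, w0, hw0, rfl⟩ :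
    {n | ∃ w : G.Walk u v, (∀ a ∈ w.support, a ∈ S) ∧ w.length = n}.Nonempty)

lemma dX_self {S : Finset V} {u : V} (hu : u ∈ S) : dX G S u u = 0 := by
  refine Nat.le_zero.mp (dX_le SimpleGraph.Walk.nil ?_)
  intro a ha
  simp only [SimpleGraph.Walk.support_nil, List.mem_singleton] at ha
  rwa [ha]

/-- Shortest walks inside `S` are induced paths. -/
lemma shortest_walk_good {S : Finset V} {u v : V} (w : G.Walk u v) :
    (∀ a ∈ w.support, a ∈ S) → w.length = dX G S u v →
    ∀ i j, i < j → j ≤ w.length →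
      w.getVert i ≠ w.getVert j ∧ (i + 2 ≤ j → ¬ G.Adj (w.getVert i) (w.getVert j)) := by
  induction w with
  | nil =>
    intro _ _ i j hij hj
    simp only [SimpleGraph.Walk.length_nil] at hj
    omega
  | @cons u b v hadj q ih =>
    intro hs hlen i j hij hj
    rw [SimpleGraph.Walk.length_cons] at hj hlen
    have hqs : ∀ a ∈ q.support, a ∈ S := fun a ha => hs a (by
      rw [SimpleGraph.Walk.support_cons]; exact List.mem_cons_of_mem _ ha)
    have huS : u ∈ S := hs u (SimpleGraph.Walk.start_mem_support _)
    have hqlen : q.length = dX G S b v := by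
      have h1 : dX G S b v ≤ q.length := dX_le q hqs
      by_contra hne
      obtain ⟨w', hw's, hw'len⟩ := exists_shortest q hqs
      have h3 : dX G S u v ≤ (SimpleGraph.Walk.cons hadj w').length := dX_le _ (by
        intro a ha
        rw [SimpleGraph.Walk.support_cons] at ha
        rcases List.mem_cons.mp ha with rfl | ha'
        · exact huS
        · exact hw's a ha')
      rw [SimpleGraph.Walk.length_cons] at h3
      omega
    cases i with
    | succ i' =>
      cases j with
      | zero => omega
      | succ j' =>
        rw [SimpleGraph.Walk.getVert_cons_succ, SimpleGraph.Walk.getVert_cons_succ]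
        have H := ih hqs hqlen i' j' (by omega) (by omega)
        exact ⟨H.1, fun h => H.2 (by omega)⟩
    | zero =>
      cases j with
      | zero => omega
      | succ j' =>
        have hj' : j' ≤ q.length := by omega
        rw [SimpleGraph.Walk.getVert_cons_succ]
        have hg0 : (SimpleGraph.Walk.cons hadj q).getVert 0 = u :=
          SimpleGraph.Walk.getVert_zero _
        rw [hg0]
        constructor
        · intro heq
          have hle := dX_le ((q.drop j').copy heq.symm rfl) (by
            intro a ha
            rw [SimpleGraph.Walk.support_copy] at ha
            exact hqs a (support_drop_subset q j' a ha))
          rw [SimpleGraph.Walk.length_copy, length_drop] at hle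
          omega
        · intro h2j hadj2
          have hle := dX_le (SimpleGraph.Walk.cons hadj2 (q.drop j')) (by
            intro a ha
            rw [SimpleGraph.Walk.support_cons] at ha
            rcases List.mem_cons.mp ha with rfl | ha'
            · exact huS
            · exact hqs a (support_drop_subset q j' a ha'))
          rw [SimpleGraph.Walk.length_cons, length_drop] at hle
          omega

lemma not_mem_support_of_max {S : Finset V} {r y a : V}
    (hmax : ∀ z ∈ S, dX G S r z ≤ dX G S r y)
    (ha : a ∈ S) (hay : a ≠ y) (w : G.Walk r a)
    (hw : ∀ x ∈ w.support, x ∈ S) (hwl : w.length = dX G S r a) :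
    y ∉ w.support := by
  intro hy
  have hsplit := w.take_spec hy
  have hlen : (w.takeUntil y hy).length + (w.dropUntil y hy).length = w.length := by
    have := congrArg SimpleGraph.Walk.length hsplit
    rwa [SimpleGraph.Walk.length_append] at this
  have h1 : dX G S r y ≤ (w.takeUntil y hy).length :=
    dX_le _ (fun x hx => hw x (SimpleGraph.Walk.support_takeUntil_subset w hy hx))
  have h2 : 1 ≤ (w.dropUntil y hy).length := by
    rcases Nat.eq_zero_or_pos (w.dropUntil y hy).length with h0 | h
    · exact absurd (eq_of_walk_length_zero _ h0).symm hay
    · exact h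
  have h3 : dX G S r a ≤ dX G S r y := hmax a ha
  omega

lemma erase_XConn {S : Finset V} {r y : V} (hX : XConn G S) (hr : r ∈ S) (hy : y ∈ S)
    (hmax : ∀ z ∈ S, dX G S r z ≤ dX G S r y) : XConn G (S.erase y) := by
  have key : ∀ u ∈ S.erase y, ∃ w : G.Walk r u, ∀ a ∈ w.support, a ∈ S.erase y := by
    intro u hu
    have huS : u ∈ S := Finset.mem_of_mem_erase hu
    have huy : u ≠ y := Finset.ne_of_mem_erase hu
    obtain ⟨w0, hw0⟩ := hX r hr u huS
    obtain ⟨w, hw, hwl⟩ := exists_shortest w0 hw0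
    have hyn := not_mem_support_of_max hmax huS huy w hw hwl
    exact ⟨w, fun a haw => Finset.mem_erase.mpr ⟨fun h => hyn (h ▸ haw), hw a haw⟩⟩
  intro u hu v hv
  obtain ⟨wu, hwu⟩ := key u hu
  obtain ⟨wv, hwv⟩ := key v hv
  refine ⟨wu.reverse.append wv, ?_⟩
  intro a ha
  rw [SimpleGraph.Walk.mem_support_append_iff] at ha
  rcases ha with h | h
  · exact hwu a (by rwa [SimpleGraph.Walk.support_reverse, List.mem_reverse] at h)
  · exact hwv a h

lemma exists_private {X : Finset V} (hCDS : CDS G X)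
    (hmin : ∀ Y, CDS G Y → X.card ≤ Y.card) (h2 : 2 ≤ X.card)
    {y : V} (hy : y ∈ X) (hConn' : XConn G (X.erase y)) :
    ∃ p, p ∉ X ∧ G.Adj y p ∧ ∀ z ∈ X, z ≠ y → ¬ G.Adj p z := by
  obtain ⟨hne, hdom, hconn⟩ := hCDS
  have hens : (X.erase y).Nonempty := by
    rw [← Finset.card_pos, Finset.card_erase_of_mem hy]; omega
  have hnotdom : ¬ Dom G (X.erase y) := by
    intro hd
    have := hmin _ ⟨hens, hd, hConn'⟩
    rw [Finset.card_erase_of_mem hy] at this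
    omega
  rw [Dom] at hnotdom
  push_neg at hnotdom
  obtain ⟨p, hp1, hp2⟩ := hnotdom
  have hpy : p ≠ y := by
    rintro rfl
    obtain ⟨z, hz⟩ := hens
    obtain ⟨w, hwS⟩ := hconn p hy z (Finset.mem_of_mem_erase hz)
    cases w with
    | nil => exact absurd hz (Finset.notMem_erase _ _)
    | cons h q =>
      have hbS := hwS _ (by
        rw [SimpleGraph.Walk.support_cons]
        exact List.mem_cons_of_mem _ q.start_mem_support)
      exact hp2 _ (Finset.mem_erase.mpr ⟨h.ne', hbS⟩) h
  have hpX : p ∉ X := fun hmem => hp1 (Finset.mem_erase.mpr ⟨hpy, hmem⟩)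
  have hady : G.Adj y p := by
    obtain ⟨u, huX, hadj⟩ := hdom p hpX
    have huy : u = y := by
      by_contra hne'
      exact hp2 u (Finset.mem_erase.mpr ⟨hne', huX⟩) hadj
    rw [huy] at hadj
    exact hadj.symm
  exact ⟨p, hpX, hady, fun z hz hzy hadj =>
    hp2 z (Finset.mem_erase.mpr ⟨hzy, hz⟩) hadj⟩

lemma ecc_le_two
    (hP5 : ¬ ∃ f : Fin 5 → V, Function.Injective f ∧
      ∀ i j : Fin 5, G.Adj (f i) (f j) ↔ (i.val + 1 = j.val ∨ j.val + 1 = i.val))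
    {X : Finset V} {x p : V} (hXconn : XConn G X) (hx : x ∈ X)
    (hpX : p ∉ X) (hpx : G.Adj x p) (hppriv : ∀ z ∈ X, z ≠ x → ¬ G.Adj p z) :
    ∀ z ∈ X, dX G X x z ≤ 2 := by
  intro z hz
  by_contra h3
  push_neg at h3
  obtain ⟨w0, hw0⟩ := hXconn x hx z hz
  obtain ⟨w, hw, hwl⟩ := exists_shortest w0 hw0
  have good := shortest_walk_good w hw hwl
  have hlen3 : 3 ≤ w.length := by omega
  have hx0 : w.getVert 0 = x := w.getVert_zero
  have a01 : G.Adj x (w.getVert 1) := by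
    have hax := w.adj_getVert_succ (i := 0) (by omega)
    rwa [hx0] at hax
  have a12 : G.Adj (w.getVert 1) (w.getVert 2) := w.adj_getVert_succ (by omega)
  have a23 : G.Adj (w.getVert 2) (w.getVert 3) := w.adj_getVert_succ (by omega)
  have m1 : w.getVert 1 ∈ X := hw _ (getVert_mem_support w 1)
  have m2 : w.getVert 2 ∈ X := hw _ (getVert_mem_support w 2)
  have m3 : w.getVert 3 ∈ X := hw _ (getVert_mem_support w 3)
  have n01 : x ≠ w.getVert 1 := by
    have := (good 0 1 (by omega) (by omega)).1; rwa [hx0] at this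
  have n02 : x ≠ w.getVert 2 := by
    have := (good 0 2 (by omega) (by omega)).1; rwa [hx0] at this
  have n03 : x ≠ w.getVert 3 := by
    have := (good 0 3 (by omega) (by omega)).1; rwa [hx0] at this
  have n13 : w.getVert 1 ≠ w.getVert 3 := (good 1 3 (by omega) (by omega)).1
  have c02 : ¬ G.Adj x (w.getVert 2) := by
    have := (good 0 2 (by omega) (by omega)).2 (by omega); rwa [hx0] at this
  have c03 : ¬ G.Adj x (w.getVert 3) := by
    have := (good 0 3 (by omega) (by omega)).2 (by omega); rwa [hx0] at this
  have c13 : ¬ G.Adj (w.getVert 1) (w.getVert 3) :=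
    (good 1 3 (by omega) (by omega)).2 (by omega)
  exact p5false hP5 hpx.symm a01 a12 a23
    (hppriv _ m1 (Ne.symm n01)) (hppriv _ m2 (Ne.symm n02)) (hppriv _ m3 (Ne.symm n03))
    c02 c03 c13
    (fun h => hpX (h ▸ m1)) (fun h => hpX (h ▸ m2)) (fun h => hpX (h ▸ m3))
    n02 n03 n13

lemma C5dom
    (hP5 : ¬ ∃ f : Fin 5 → V, Function.Injective f ∧
      ∀ i j : Fin 5, G.Adj (f i) (f j) ↔ (i.val + 1 = j.val ∨ j.val + 1 = i.val))
    {X : Finset V} (hXdom : Dom G X) (hXconn : XConn G X)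
    {x m y p q : V} (hxX : x ∈ X) (hmX : m ∈ X) (hyX : y ∈ X)
    (hxm : G.Adj x m) (hmy : G.Adj m y) (hxy : ¬ G.Adj x y) (hxyne : x ≠ y)
    (hpX : p ∉ X) (hpx : G.Adj x p) (hppriv : ∀ z ∈ X, z ≠ x → ¬ G.Adj p z)
    (hqX : q ∉ X) (hqy : G.Adj y q) (hqpriv : ∀ z ∈ X, z ≠ y → ¬ G.Adj q z)
    (hpq : G.Adj p q) :
    ∀ v, v ≠ x → v ≠ m → v ≠ y → G.Adj v x ∨ G.Adj v m ∨ G.Adj v y := by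
  intro v hvx hvm hvy
  by_contra hcon
  push_neg at hcon
  obtain ⟨hnx, hnm, hny⟩ := hcon
  have hvp : v ≠ p := fun h => hnx (by rw [h]; exact hpx.symm)
  have hvq : v ≠ q := fun h => hny (by rw [h]; exact hqy.symm)
  have hmnex : m ≠ x := hxm.ne'
  have hmney : m ≠ y := hmy.ne
  have hvnp : ¬ G.Adj v p := by
    intro hvp'
    exact p5false hP5 hvp' hpx.symm hxm hmy
      hnx hnm hny
      (hppriv m hmX hmnex) (hppriv y hyX (Ne.symm hxyne)) hxy
      hvx hvm hvy
      (fun h => hpX (h ▸ hmX)) (fun h => hpX (h ▸ hyX)) hxyne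
  have hvnq : ¬ G.Adj v q := by
    intro hvq'
    exact p5false hP5 hvq' hqy.symm hmy.symm hxm.symm
      hny hnm hnx
      (hqpriv m hmX hmney) (hqpriv x hxX hxyne)
      (fun h => hxy h.symm)
      hvy hvm hvx
      (fun h => hqX (h ▸ hmX)) (fun h => hqX (h ▸ hxX)) (Ne.symm hxyne)
  have hecc : ∀ z ∈ X, dX G X x z ≤ 2 := ecc_le_two hP5 hXconn hxX hpX hpx hppriv
  by_cases hvX : v ∈ X
  · obtain ⟨w0, hw0⟩ := hXconn x hxX v hvX
    obtain ⟨w, hw, hwl⟩ := exists_shortest w0 hw0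
    have good := shortest_walk_good w hw hwl
    have hx0 : w.getVert 0 = x := w.getVert_zero
    have hne0 : w.length ≠ 0 := fun h0 => hvx (eq_of_walk_length_zero w h0).symm
    have hne1 : w.length ≠ 1 := by
      intro h1
      have h2 : w.getVert 1 = v := by have h' := w.getVert_length; rw [h1] at h'; exact h'
      have hax := w.adj_getVert_succ (i := 0) (by omega)
      rw [hx0, h2] at hax
      exact hnx hax.symm
    have hlen2 : w.length = 2 := by
      have := hecc v hvX; omega
    have a01 : G.Adj x (w.getVert 1) := by
      have hax := w.adj_getVert_succ (i := 0) (by omega)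
      rwa [hx0] at hax
    have a12 : G.Adj (w.getVert 1) v := by
      have hax := w.adj_getVert_succ (i := 1) (by omega)
      rwa [show w.getVert 2 = v from by have h' := w.getVert_length; rw [hlen2] at h'; exact h'] at hax
    have m1 : w.getVert 1 ∈ X := hw _ (getVert_mem_support w 1)
    have n01 : x ≠ w.getVert 1 := by
      have := (good 0 1 (by omega) (by omega)).1; rwa [hx0] at this
    exact p5false hP5 a12.symm a01.symm hpx hpq
      hnx hvnp hvnq
      (fun h => hppriv _ m1 (Ne.symm n01) h.symm)
      (fun h => hqpriv _ m1 (fun heq => hny ((heq ▸ a12).symm)) h.symm)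
      (fun h => hqpriv x hxX hxyne h.symm)
      hvx hvp hvq
      (fun h => hpX (h ▸ m1)) (fun h => hqX (h ▸ m1)) (fun h => hqX (h ▸ hxX))
  · obtain ⟨u0, hu0X, hu0adj⟩ := hXdom v hvX
    classical
    have hAne : (X.filter (fun z => G.Adj v z)).Nonempty :=
      ⟨u0, Finset.mem_filter.mpr ⟨hu0X, hu0adj⟩⟩
    obtain ⟨z, hzA, hzmin⟩ :=
      Finset.exists_min_image (X.filter (fun z => G.Adj v z)) (fun z => dX G X x z) hAne
    have hzX : z ∈ X := (Finset.mem_filter.mp hzA).1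
    have hvz : G.Adj v z := (Finset.mem_filter.mp hzA).2
    have hzx : z ≠ x := fun h => hnx (h ▸ hvz)
    have hzy : z ≠ y := fun h => hny (h ▸ hvz)
    obtain ⟨w0, hw0⟩ := hXconn x hxX z hzX
    obtain ⟨w, hw, hwl⟩ := exists_shortest w0 hw0
    have good := shortest_walk_good w hw hwl
    have hx0 : w.getVert 0 = x := w.getVert_zero
    have hne0 : w.length ≠ 0 := fun h0 => hzx (eq_of_walk_length_zero w h0).symm
    have hle2 : w.length ≤ 2 := by
      have := hecc z hzX; omega
    rcases Nat.lt_or_ge w.length 2 with h1 | h2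
    · have hlen1 : w.length = 1 := by omega
      have axz : G.Adj x z := by
        have hax := w.adj_getVert_succ (i := 0) (by omega)
        rwa [hx0, show w.getVert 1 = z from by have h' := w.getVert_length; rw [hlen1] at h'; exact h'] at hax
      exact p5false hP5 hvz axz.symm hpx hpq
        hnx hvnp hvnq
        (fun h => hppriv z hzX hzx h.symm)
        (fun h => hqpriv z hzX hzy h.symm)
        (fun h => hqpriv x hxX hxyne h.symm)
        hvx hvp hvq
        (fun h => hpX (h ▸ hzX)) (fun h => hqX (h ▸ hzX)) (fun h => hqX (h ▸ hxX))
    · have hlen2 : w.length = 2 := by omega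
      have a01 : G.Adj x (w.getVert 1) := by
        have hax := w.adj_getVert_succ (i := 0) (by omega)
        rwa [hx0] at hax
      have a12 : G.Adj (w.getVert 1) z := by
        have hax := w.adj_getVert_succ (i := 1) (by omega)
        rwa [show w.getVert 2 = z from by have h' := w.getVert_length; rw [hlen2] at h'; exact h'] at hax
      have m1 : w.getVert 1 ∈ X := hw _ (getVert_mem_support w 1)
      have n01 : x ≠ w.getVert 1 := by
        have := (good 0 1 (by omega) (by omega)).1; rwa [hx0] at this
      have c02 : ¬ G.Adj x z := by
        have := (good 0 2 (by omega) (by omega)).2 (by omega)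
        rwa [hx0, show w.getVert 2 = z from by have h' := w.getVert_length; rw [hlen2] at h'; exact h'] at this
      have hdg1 : dX G X x (w.getVert 1) ≤ 1 := by
        have := dX_le (SimpleGraph.Walk.cons a01 SimpleGraph.Walk.nil) (by
          intro a ha
          simp only [SimpleGraph.Walk.support_cons, SimpleGraph.Walk.support_nil,
            List.mem_cons, List.mem_singleton, List.not_mem_nil, or_false] at ha
          rcases ha with rfl | rfl
          · exact hxX
          · exact m1)
        simpa using this
      have hvg1 : ¬ G.Adj v (w.getVert 1) := by
        intro hadj
        have hmem : w.getVert 1 ∈ X.filter (fun z => G.Adj v z) :=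
          Finset.mem_filter.mpr ⟨m1, hadj⟩
        have := hzmin _ hmem
        omega
      exact p5false hP5 hvz a12.symm a01.symm hpx
        hvg1 hnx hvnp
        (fun h => c02 h.symm)
        (fun h => hppriv z hzX hzx h.symm)
        (fun h => hppriv _ m1 (Ne.symm n01) h.symm)
        (fun h => hvX (h ▸ m1))
        hvx hvp
        hzx
        (fun h => hpX (h ▸ hzX))
        (fun h => hpX (h ▸ m1))

lemma XConn_triple {a b c : V} (hab : G.Adj a b) (hbc : G.Adj b c) :
    XConn G ({a, b, c} : Finset V) := by
  have key : ∀ u ∈ ({a, b, c} : Finset V), ∃ w : G.Walk u b,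
      ∀ t ∈ w.support, t ∈ ({a, b, c} : Finset V) := by
    intro u hu
    simp only [Finset.mem_insert, Finset.mem_singleton] at hu
    rcases hu with rfl | rfl | rfl
    · refine ⟨SimpleGraph.Walk.cons hab SimpleGraph.Walk.nil, ?_⟩
      intro t ht
      simp only [SimpleGraph.Walk.support_cons, SimpleGraph.Walk.support_nil,
        List.mem_cons, List.mem_singleton, List.not_mem_nil, or_false] at ht
      rcases ht with rfl | rfl <;> simp
    · refine ⟨SimpleGraph.Walk.nil, ?_⟩
      intro t ht
      simp only [SimpleGraph.Walk.support_nil, List.mem_singleton] at ht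
      rw [ht]; simp
    · refine ⟨SimpleGraph.Walk.cons hbc.symm SimpleGraph.Walk.nil, ?_⟩
      intro t ht
      simp only [SimpleGraph.Walk.support_cons, SimpleGraph.Walk.support_nil,
        List.mem_cons, List.mem_singleton, List.not_mem_nil, or_false] at ht
      rcases ht with rfl | rfl <;> simp
  intro u hu v hv
  obtain ⟨wu, h1⟩ := key u hu
  obtain ⟨wv, h2⟩ := key v hv
  refine ⟨wu.append wv.reverse, ?_⟩
  intro t ht
  rw [SimpleGraph.Walk.mem_support_append_iff] at ht
  rcases ht with h | h
  · exact h1 t h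
  · exact h2 t (by rwa [SimpleGraph.Walk.support_reverse, List.mem_reverse] at h)

lemma clique_of_min
    (hP5 : ¬ ∃ f : Fin 5 → V, Function.Injective f ∧
      ∀ i j : Fin 5, G.Adj (f i) (f j) ↔ (i.val + 1 = j.val ∨ j.val + 1 = i.val))
    {X : Finset V} (hCDS : CDS G X)
    (hmin : ∀ Y, CDS G Y → X.card ≤ Y.card) (h4 : 4 ≤ X.card) :
    ∀ u ∈ X, ∀ w ∈ X, u ≠ w → G.Adj u w := by
  obtain ⟨hne, hdom, hconn⟩ := hCDS
  obtain ⟨r, hr⟩ := hne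
  obtain ⟨x, hxX, hxmax⟩ := Finset.exists_max_image X (fun z => dX G X r z) ⟨r, hr⟩
  have hx_erase : XConn G (X.erase x) := erase_XConn hconn hr hxX hxmax
  obtain ⟨p, hpX, hpadj, hppriv⟩ :=
    exists_private ⟨⟨r, hr⟩, hdom, hconn⟩ hmin (by omega) hxX hx_erase
  have hecc := ecc_le_two hP5 hconn hxX hpX hpadj hppriv
  obtain ⟨y, hyX, hymax⟩ := Finset.exists_max_image X (fun z => dX G X x z) ⟨r, hr⟩
  have hy_erase : XConn G (X.erase y) := erase_XConn hconn hxX hyX hymax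
  obtain ⟨q, hqX, hqadj, hqpriv⟩ :=
    exists_private ⟨⟨r, hr⟩, hdom, hconn⟩ hmin (by omega) hyX hy_erase
  have hC5 : ∀ a b c pa pc : V, a ∈ X → b ∈ X → c ∈ X → G.Adj a b → G.Adj b c →
      ¬ G.Adj a c → a ≠ c → pa ∉ X → G.Adj a pa → (∀ z ∈ X, z ≠ a → ¬ G.Adj pa z) →
      pc ∉ X → G.Adj c pc → (∀ z ∈ X, z ≠ c → ¬ G.Adj pc z) → G.Adj pa pc → False := by
    intro a b c pa pc haX hbX hcX hab hbc hac hacne hpaX hpaadj hpapriv hpcX hpcadj hpcpriv hpapc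
    have hdom3 := C5dom hP5 hdom hconn haX hbX hcX hab hbc hac hacne
      hpaX hpaadj hpapriv hpcX hpcadj hpcpriv hpapc
    have hcds : CDS G {a, b, c} := by
      refine ⟨⟨a, by simp⟩, ?_, XConn_triple hab hbc⟩
      intro v hv
      simp only [Finset.mem_insert, Finset.mem_singleton] at hv
      push_neg at hv
      obtain ⟨h1, h2, h3⟩ := hv
      rcases hdom3 v h1 h2 h3 with h | h | h
      · exact ⟨a, by simp, h⟩
      · exact ⟨b, by simp, h⟩
      · exact ⟨c, by simp, h⟩
    have hle := hmin _ hcds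
    have hcard : ({a, b, c} : Finset V).card ≤ 3 := by
      refine le_trans (Finset.card_insert_le _ _) ?_
      have := Finset.card_insert_le b ({c} : Finset V)
      simp only [Finset.card_singleton] at this
      omega
    omega
  have hxy1 : dX G X x y ≤ 1 := by
    by_contra h2'
    have h2 : dX G X x y = 2 := le_antisymm (hecc y hyX) (by omega)
    have hyx : y ≠ x := by
      intro h
      rw [h, dX_self hxX] at h2
      omega
    obtain ⟨w0, hw0⟩ := hconn x hxX y hyX
    obtain ⟨w, hw, hwl⟩ := exists_shortest w0 hw0
    have hlen2 : w.length = 2 := by rw [hwl, h2]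
    have good := shortest_walk_good w hw hwl
    have hx0 : w.getVert 0 = x := w.getVert_zero
    have hxy' : w.getVert 2 = y := by
      have h' := w.getVert_length; rw [hlen2] at h'; exact h'
    have a01 : G.Adj x (w.getVert 1) := by
      have hax := w.adj_getVert_succ (i := 0) (by omega)
      rwa [hx0] at hax
    have a12 : G.Adj (w.getVert 1) y := by
      have hax := w.adj_getVert_succ (i := 1) (by omega)
      rwa [hxy'] at hax
    have m1 : w.getVert 1 ∈ X := hw _ (getVert_mem_support w 1)
    have n01 : x ≠ w.getVert 1 := by
      have := (good 0 1 (by omega) (by omega)).1; rwa [hx0] at this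
    have n12 : w.getVert 1 ≠ y := by
      have := (good 1 2 (by omega) (by omega)).1; rwa [hxy'] at this
    have cxy : ¬ G.Adj x y := by
      have := (good 0 2 (by omega) (by omega)).2 (by omega)
      rwa [hx0, hxy'] at this
    have hpqne : p ≠ q := by
      rintro rfl
      exact hppriv y hyX hyx hqadj.symm
    by_cases hpq : G.Adj p q
    · exact hC5 x (w.getVert 1) y p q hxX m1 hyX a01 a12 cxy (Ne.symm hyx)
        hpX hpadj hppriv hqX hqadj hqpriv hpq
    · exact p5false hP5 hpadj.symm a01 a12 hqadj
        (hppriv _ m1 (Ne.symm n01))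
        (hppriv y hyX hyx)
        hpq
        cxy
        (fun h => hqpriv x hxX (Ne.symm hyx) h.symm)
        (fun h => hqpriv _ m1 n12 h.symm)
        (fun h => hpX (h ▸ m1))
        (fun h => hpX (h ▸ hyX))
        hpqne
        (Ne.symm hyx)
        (fun h => hqX (h ▸ hxX))
        (fun h => hqX (h ▸ m1))
  have huniv : ∀ z ∈ X, z ≠ x → G.Adj x z := by
    intro z hz hzx
    have hd : dX G X x z ≤ 1 := le_trans (hymax z hz) hxy1
    obtain ⟨w0, hw0⟩ := hconn x hxX z hz
    obtain ⟨w, hw, hwl⟩ := exists_shortest w0 hw0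
    have hne0 : w.length ≠ 0 := fun h0 => hzx (eq_of_walk_length_zero w h0).symm
    have hlen1 : w.length = 1 := by omega
    have hax := w.adj_getVert_succ (i := 0) (by omega)
    have h1 : w.getVert 1 = z := by
      have h' := w.getVert_length; rw [hlen1] at h'; exact h'
    rwa [w.getVert_zero, h1] at hax
  have herase : ∀ z ∈ X, z ≠ x → XConn G (X.erase z) := by
    intro z hz hzx
    have hxe : x ∈ X.erase z := Finset.mem_erase.mpr ⟨Ne.symm hzx, hxX⟩
    have key : ∀ u ∈ X.erase z, ∃ w : G.Walk u x, ∀ a ∈ w.support, a ∈ X.erase z := by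
      intro u hu
      by_cases h : u = x
      · subst h
        refine ⟨SimpleGraph.Walk.nil, ?_⟩
        intro a ha
        simp only [SimpleGraph.Walk.support_nil, List.mem_singleton] at ha
        rw [ha]; exact hu
      · refine ⟨SimpleGraph.Walk.cons ((huniv u (Finset.mem_of_mem_erase hu) h).symm)
          SimpleGraph.Walk.nil, ?_⟩
        intro a ha
        simp only [SimpleGraph.Walk.support_cons, SimpleGraph.Walk.support_nil,
          List.mem_cons, List.mem_singleton, List.not_mem_nil, or_false] at ha
        rcases ha with rfl | rfl
        · exact hu
        · exact hxe
    intro u hu v hv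
    obtain ⟨wu, hwu⟩ := key u hu
    obtain ⟨wv, hwv⟩ := key v hv
    refine ⟨wu.append wv.reverse, ?_⟩
    intro a ha
    rw [SimpleGraph.Walk.mem_support_append_iff] at ha
    rcases ha with h | h
    · exact hwu a h
    · exact hwv a (by rwa [SimpleGraph.Walk.support_reverse, List.mem_reverse] at h)
  intro u hu w hw huw
  by_contra hnadj
  have hux : u ≠ x := by
    intro h
    apply hnadj
    rw [h]
    exact huniv w hw (fun hwx => huw (h.trans hwx.symm))
  have hwx : w ≠ x := by
    intro h
    apply hnadj
    rw [h]
    exact (huniv u hu hux).symm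
  obtain ⟨pu, hpuX, hpuadj, hpupriv⟩ :=
    exists_private ⟨⟨r, hr⟩, hdom, hconn⟩ hmin (by omega) hu (herase u hu hux)
  obtain ⟨pw, hpwX, hpwadj, hpwpriv⟩ :=
    exists_private ⟨⟨r, hr⟩, hdom, hconn⟩ hmin (by omega) hw (herase w hw hwx)
  have hpupw : pu ≠ pw := by
    rintro rfl
    exact hpupriv w hw (Ne.symm huw) hpwadj.symm
  have haux : G.Adj u x := (huniv u hu hux).symm
  have haxw : G.Adj x w := huniv w hw hwx
  by_cases hpq2 : G.Adj pu pw
  · exact hC5 u x w pu pw hu hxX hw haux haxw hnadj huw hpuX hpuadj hpupriv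
      hpwX hpwadj hpwpriv hpq2
  · exact p5false hP5 hpuadj.symm haux haxw hpwadj
      (hpupriv x hxX (Ne.symm hux))
      (hpupriv w hw (Ne.symm huw))
      hpq2
      hnadj
      (fun h => hpwpriv u hu huw h.symm)
      (fun h => hpwpriv x hxX (Ne.symm hwx) h.symm)
      (fun h => hpuX (h ▸ hxX))
      (fun h => hpuX (h ▸ hw))
      hpupw
      huw
      (fun h => hpwX (h ▸ hu))
      (fun h => hpwX (h ▸ hxX))

lemma exists_min_cds (hconn : G.Connected) :
    ∃ X : Finset V, CDS G X ∧ ∀ Y, CDS G Y → X.card ≤ Y.card := by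
  classical
  have huniv : CDS G (Finset.univ : Finset V) := by
    refine ⟨?_, fun v hv => absurd (Finset.mem_univ v) hv, fun u _ v _ => ?_⟩
    · have : Nonempty V := hconn.nonempty
      exact Finset.univ_nonempty
    · obtain ⟨w⟩ := hconn.preconnected u v
      exact ⟨w, fun a _ => Finset.mem_univ a⟩
  have hFne : (Finset.univ.filter (fun S : Finset V => CDS G S)).Nonempty :=
    ⟨Finset.univ, Finset.mem_filter.mpr ⟨Finset.mem_univ _, huniv⟩⟩
  obtain ⟨X, hXF, hXmin⟩ :=
    Finset.exists_min_image (Finset.univ.filter (fun S : Finset V => CDS G S))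
      Finset.card hFne
  exact ⟨X, (Finset.mem_filter.mp hXF).2,
    fun Y hY => hXmin Y (Finset.mem_filter.mpr ⟨Finset.mem_univ _, hY⟩)⟩

end P5BMaux

/-- A connected `P₅`-free graph admitting a bipartizing matching has a dominating set
of size at most 4. -/
theorem p5_free_bm_dominating {V : Type*} [Fintype V] [DecidableEq V] (G : SimpleGraph V)
    (hconn : G.Connected)
    (hP5 : ¬ ∃ f : Fin 5 → V, Function.Injective f ∧
      ∀ i j : Fin 5, G.Adj (f i) (f j) ↔ (i.val + 1 = j.val ∨ j.val + 1 = i.val))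
    (hbm : ∃ M, IsBipartizingMatching G M) :
    ∃ S : Finset V, S.card ≤ 4 ∧ ∀ v : V, v ∉ S → ∃ u ∈ S, G.Adj v u := by
  classical
  obtain ⟨M, hMle, hMmatch, hMcol⟩ := hbm
  obtain ⟨X, hCDS, hmin⟩ := P5BMaux.exists_min_cds hconn
  refine ⟨X, ?_, fun v hv => hCDS.2.1 v hv⟩
  by_contra h5
  push_neg at h5
  have hclique := P5BMaux.clique_of_min hP5 hCDS hmin (by omega)
  obtain ⟨C⟩ := hMcol
  have hsum : (X.filter (fun z => C z = 0)).card
      + (X.filter (fun z => ¬ C z = 0)).card = X.card :=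
    Finset.card_filter_add_card_filter_not (p := fun z => C z = 0)
  have key : ∀ s : Finset V, s ⊆ X → (∀ a ∈ s, ∀ b ∈ s, C a = C b) → ¬ (2 < s.card) := by
    intro s hsub hcol hcard
    obtain ⟨a, ha, b, hb, c, hc, hab, hac, hbc⟩ := Finset.two_lt_card.mp hcard
    have gab : G.Adj a b := hclique a (hsub ha) b (hsub hb) hab
    have gac : G.Adj a c := hclique a (hsub ha) c (hsub hc) hac
    have mab : M.Adj a b := by
      by_contra hm
      exact (C.valid (by rw [SimpleGraph.sdiff_adj]; exact ⟨gab, hm⟩)) (hcol a ha b hb)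
    have mac : M.Adj a c := by
      by_contra hm
      exact (C.valid (by rw [SimpleGraph.sdiff_adj]; exact ⟨gac, hm⟩)) (hcol a ha c hc)
    exact hbc (hMmatch a b c mab mac)
  have h0 := key (X.filter (fun z => C z = 0)) (Finset.filter_subset _ _) (fun a ha b hb => by
    rw [(Finset.mem_filter.mp ha).2, (Finset.mem_filter.mp hb).2])
  have h1 := key (X.filter (fun z => ¬ C z = 0)) (Finset.filter_subset _ _) (fun a ha b hb => by
    have ha' := (Finset.mem_filter.mp ha).2
    have hb' := (Finset.mem_filter.mp hb).2
    have htwo : ∀ i : Fin 2, ¬ i = 0 → i = 1 := by decide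
    rw [htwo _ ha', htwo _ hb'])
  omega
end

section
/- If two vertices u and v of a graph G have at least 2d+1 common neighbors, then in every (2,d)-coloring of G, the vertices u and v receive the same color. -/
/-- If `u` and `v` have at least `2d+1` common neighbors, then in every `(2,d)`-coloring
of `G` they receive the same color. -/
theorem same_color_of_many_common_neighbors {V : Type*} [Fintype V] (G : SimpleGraph V)
    (d : ℕ) (u v : V) (S : Finset V) (hcard : 2 * d + 1 ≤ S.card)
    (hS : ∀ w ∈ S, G.Adj u w ∧ G.Adj v w)
    (c : V → Fin 2) (hc : ∀ x : V, {y : V | G.Adj x y ∧ c y = c x}.ncard ≤ d) :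
    c u = c v := by
  classical
  by_contra hne
  have key : ∀ a : V, (∀ w ∈ S, G.Adj a w) →
      (S.filter (fun w => c w = c a)).card ≤ d := by
    intro a ha
    have hsub : (↑(S.filter (fun w => c w = c a)) : Set V) ⊆
        {y : V | G.Adj a y ∧ c y = c a} := by
      intro y hy
      simp only [Finset.coe_filter, Set.mem_setOf_eq] at hy ⊢
      exact ⟨ha y hy.1, hy.2⟩
    calc (S.filter (fun w => c w = c a)).card
        = (↑(S.filter (fun w => c w = c a)) : Set V).ncard := by
          rw [Set.ncard_coe_finset]
      _ ≤ {y : V | G.Adj a y ∧ c y = c a}.ncard :=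
          Set.ncard_le_ncard hsub (Set.toFinite _)
      _ ≤ d := hc a
  have hu := key u (fun w hw => (hS w hw).1)
  have hv := key v (fun w hw => (hS w hw).2)
  have hcover : S ⊆ S.filter (fun w => c w = c u) ∪ S.filter (fun w => c w = c v) := by
    intro w hw
    simp only [Finset.mem_union, Finset.mem_filter]
    rcases eq_or_ne (c w) (c u) with h | h
    · exact Or.inl ⟨hw, h⟩
    · refine Or.inr ⟨hw, ?_⟩
      have h1 : (c w).val ≠ (c u).val := fun e => h (Fin.ext e)
      have h2 : (c u).val ≠ (c v).val := fun e => hne (Fin.ext e)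
      have := (c w).isLt; have := (c u).isLt; have := (c v).isLt
      exact Fin.ext (by omega)
  have := (Finset.card_le_card hcover).trans (Finset.card_union_le _ _)
  omega
end

section
/- Let G be a graph in which every odd cycle is a triangle and whose four vertices {v₁, v₂, v₃, u} induce a K₄. If G is connected, has no cut vertex, and contains a vertex outside {v₁, v₂, v₃, u}, then G has an odd cycle of length at least 5 (a contradiction); hence in such a 2-connected graph containing K₄, V(G) = {v₁, v₂, v₃, u}. -/
open SimpleGraph Walk


private lemma path_concat {V : Type*} {G : SimpleGraph V} {u v w : V} {p : G.Walk u v}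
    (hp : p.IsPath) (h : G.Adj v w) (hw : w ∉ p.support) : (p.concat h).IsPath := by
  rw [SimpleGraph.Walk.isPath_def, Walk.support_concat,
    List.nodup_append]
  exact ⟨hp.support_nodup, List.nodup_singleton w,
    fun a ha b hb hab => hw ((List.mem_singleton.mp hb) ▸ hab ▸ ha)⟩

private lemma firstHit {V : Type*} {G : SimpleGraph V} (T : Set V) :
    ∀ {x a : V} (W : G.Walk x a), a ∈ T → x ∉ T →
      ∃ (y d : V), G.Adj y d ∧ d ∈ T ∧ ∃ p : G.Walk x y, p.IsPath ∧
        (∀ v ∈ p.support, v ∉ T) ∧ (∀ v ∈ p.support, v ∈ W.support) := by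
  classical
  intro x a W
  induction W with
  | nil => intro ha hx; exact absurd ha hx
  | @cons x z a e W ih =>
    intro ha hx
    by_cases hz : z ∈ T
    · exact ⟨x, z, e, hz, Walk.nil, Walk.IsPath.nil, by simpa using hx, by simp⟩
    · obtain ⟨y, d, hyd, hd, p, hp, hpT, hpW⟩ := ih ha hz
      by_cases hxp : x ∈ p.support
      · refine ⟨y, d, hyd, hd, p.dropUntil x hxp, hp.dropUntil hxp, ?_, ?_⟩
        · exact fun v hv => hpT v (Walk.support_dropUntil_subset _ _ hv)
        · intro v hv
          have := hpW v (Walk.support_dropUntil_subset _ _ hv)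
          simp only [Walk.support_cons, List.mem_cons]
          exact Or.inr this
      · refine ⟨y, d, hyd, hd, Walk.cons e p, hp.cons hxp, ?_, ?_⟩
        · intro v hv
          rcases (by simpa using hv : v = x ∨ v ∈ p.support) with rfl | hv'
          · exact hx
          · exact hpT v hv'
        · intro v hv
          rcases (by simpa using hv : v = x ∨ v ∈ p.support) with rfl | hv'
          · simp
          · simp only [Walk.support_cons, List.mem_cons]
            exact Or.inr (hpW v hv')

private lemma innerCycle {V : Type*} {G : SimpleGraph V}
    (htri : ∀ (a : V) (w : G.Walk a a), w.IsCycle → Odd w.length → w.length = 3)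
    {s a b c x : V}
    (hab : G.Adj a b) (hbc : G.Adj b c) (hbs : G.Adj b s) (hcs : G.Adj c s)
    (hsa : s ≠ a) (hsb : s ≠ b) (hxa : x ≠ a) (hxb : x ≠ b) (hxc : x ≠ c)
    (hsx : G.Adj s x)
    (p : G.Walk x a) (hp : p.IsPath)
    (hs : s ∉ p.support) (hb : b ∉ p.support) (hc : c ∉ p.support) : False := by
  have hsx_not : s(s, x) ∉ p.edges := fun h => hs (p.fst_mem_support_of_mem_edges h)
  rcases Nat.even_or_odd p.length with hev | hod
  · -- even: cycle s → x → … → a → b → s, length p.length + 3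
    set Q : G.Walk x s := (p.concat hab).concat hbs with hQ
    have hQpath : Q.IsPath := by
      refine path_concat (path_concat hp hab hb) hbs ?_
      rw [Walk.support_concat]
      simp only [List.concat_eq_append, List.mem_append, List.mem_singleton]
      rintro (h | h)
      · exact hs h
      · exact hsb h
    have hedge : s(s, x) ∉ Q.edges := by
      rw [hQ, Walk.edges_concat, Walk.edges_concat]
      simp only [List.concat_eq_append, List.mem_append, List.mem_singleton]
      rintro ((h | h) | h)
      · exact hsx_not h
      · rcases Sym2.eq_iff.mp h with ⟨h1, h2⟩ | ⟨h1, h2⟩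
        · exact hsa h1
        · exact hsb h1
      · rcases Sym2.eq_iff.mp h with ⟨h1, h2⟩ | ⟨h1, h2⟩
        · exact hsb h1
        · exact hxb h2
    have hcyc : (Walk.cons hsx Q).IsCycle :=
      (Walk.cons_isCycle_iff Q hsx).mpr ⟨hQpath, hedge⟩
    have hlen : (Walk.cons hsx Q).length = p.length + 3 := by
      simp [hQ, Walk.length_concat]
    have hodd : Odd (Walk.cons hsx Q).length := by
      rw [hlen]
      obtain ⟨k, hk⟩ := hev
      exact ⟨k + 1, by omega⟩
    have h3 := htri s (Walk.cons hsx Q) hcyc hodd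
    rw [hlen] at h3
    have hp0 : p.length = 0 := by omega
    exact hxa (Walk.eq_of_length_eq_zero hp0)
  · -- odd: cycle s → x → … → a → b → c → s, length p.length + 4
    set Q : G.Walk x s := ((p.concat hab).concat hbc).concat hcs with hQ
    have h1 : (p.concat hab).IsPath := path_concat hp hab hb
    have hc1 : c ∉ (p.concat hab).support := by
      rw [Walk.support_concat]
      simp only [List.concat_eq_append, List.mem_append, List.mem_singleton]
      rintro (h | h)
      · exact hc h
      · exact hbc.ne' h
    have h2 : ((p.concat hab).concat hbc).IsPath := path_concat h1 hbc hc1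
    have hs2 : s ∉ ((p.concat hab).concat hbc).support := by
      rw [Walk.support_concat, Walk.support_concat]
      simp only [List.concat_eq_append, List.mem_append, List.mem_singleton]
      rintro ((h | h) | h)
      · exact hs h
      · exact hsb h
      · exact hcs.ne' h
    have hQpath : Q.IsPath := path_concat h2 hcs hs2
    have hedge : s(s, x) ∉ Q.edges := by
      rw [hQ, Walk.edges_concat, Walk.edges_concat, Walk.edges_concat]
      simp only [List.concat_eq_append, List.mem_append, List.mem_singleton]
      rintro (((h | h) | h) | h)
      · exact hsx_not h
      · rcases Sym2.eq_iff.mp h with ⟨h1', h2'⟩ | ⟨h1', h2'⟩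
        · exact hsa h1'
        · exact hsb h1'
      · rcases Sym2.eq_iff.mp h with ⟨h1', h2'⟩ | ⟨h1', h2'⟩
        · exact hsb h1'
        · exact hxb h2'
      · rcases Sym2.eq_iff.mp h with ⟨h1', h2'⟩ | ⟨h1', h2'⟩
        · exact hcs.ne' h1'
        · exact hxc h2'
    have hcyc : (Walk.cons hsx Q).IsCycle :=
      (Walk.cons_isCycle_iff Q hsx).mpr ⟨hQpath, hedge⟩
    have hlen : (Walk.cons hsx Q).length = p.length + 4 := by
      simp [hQ, Walk.length_concat]
    have hodd' : Odd (Walk.cons hsx Q).length := by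
      rw [hlen]
      obtain ⟨k, hk⟩ := hod
      exact ⟨k + 2, by omega⟩
    have h3 := htri s (Walk.cons hsx Q) hcyc hodd'
    rw [hlen] at h3
    omega

private lemma noAttach {V : Type*} {G : SimpleGraph V}
    (htri : ∀ (a : V) (w : G.Walk a a), w.IsCycle → Odd w.length → w.length = 3)
    {s a b c : V}
    (hcut : (G.induce {w : V | w ≠ s}).Connected)
    (hsa : G.Adj s a) (hsb : G.Adj s b) (hsc : G.Adj s c)
    (hab : G.Adj a b) (hac : G.Adj a c) (hbc : G.Adj b c)
    {x : V} (hxa : x ≠ a) (hxb : x ≠ b) (hxc : x ≠ c) (hxs : x ≠ s)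
    (hsx : G.Adj s x) : False := by
  classical
  obtain ⟨W0⟩ := hcut ⟨x, hxs⟩ ⟨a, hsa.ne'⟩
  set W : G.Walk x a := W0.map (SimpleGraph.Embedding.induce {w : V | w ≠ s}).toHom with hW
  have hWs : ∀ v ∈ W.support, v ≠ s := by
    intro v hv
    have hv : v ∈ W0.support.map (SimpleGraph.Embedding.induce (G := G) {w : V | w ≠ s}).toHom := by
      rw [← Walk.support_map]; exact hv
    rw [List.mem_map] at hv
    obtain ⟨⟨v', hv'⟩, _, rfl⟩ := hv
    exact hv'
  obtain ⟨y, d, hyd, hd, p, hp, hpT, hpW⟩ :=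
    firstHit {v : V | v = a ∨ v = b ∨ v = c} W (Or.inl rfl) (by
      simp only [Set.mem_setOf_eq]; push_neg; exact ⟨hxa, hxb, hxc⟩)
  have hps : s ∉ p.support := fun h => hWs s (hpW s h) rfl
  have hap : a ∉ p.support := fun h => hpT a h (Or.inl rfl)
  have hbp : b ∉ p.support := fun h => hpT b h (Or.inr (Or.inl rfl))
  have hcp : c ∉ p.support := fun h => hpT c h (Or.inr (Or.inr rfl))
  have hdny : d ∉ p.support := fun h => hpT d h hd
  have hq : (p.concat hyd).IsPath := path_concat hp hyd hdny
  have hnotq : ∀ t, t ∉ p.support → t ≠ d → t ∉ (p.concat hyd).support := by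
    intro t h1 h2 h
    rw [Walk.support_concat] at h
    simp only [List.concat_eq_append, List.mem_append, List.mem_singleton] at h
    rcases h with h | h
    · exact h1 h
    · exact h2 h
  have hxT : ∀ v ∈ p.support, ¬(v = a ∨ v = b ∨ v = c) := hpT
  have hxa' : x ∉ p.support → False := fun h => h p.start_mem_support
  rcases hd with hd | hd | hd
  · subst hd
    exact innerCycle htri hab hbc hsb.symm hsc.symm hsa.ne hsb.ne hxa hxb hxc hsx
      (p.concat hyd) hq (hnotq s hps hsa.ne) (hnotq b hbp hab.ne') (hnotq c hcp hac.ne')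
  · subst hd
    exact innerCycle htri hbc hac.symm hsc.symm hsa.symm hsb.ne hsc.ne hxb hxc hxa hsx
      (p.concat hyd) hq (hnotq s hps hsb.ne) (hnotq c hcp hbc.ne') (hnotq a hap hab.ne)
  · subst hd
    exact innerCycle htri hac.symm hab hsa.symm hsb.symm hsc.ne hsa.ne hxc hxa hxb hsx
      (p.concat hyd) hq (hnotq s hps hsc.ne) (hnotq a hap hac.ne) (hnotq b hbp hbc.ne)


/-- If every odd cycle of `G` is a triangle, `G` is connected with no cut vertex, and
`G` contains a `K₄` on `{v₁, v₂, v₃, u}`, then `G` has no further vertex. -/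
theorem two_connected_triangle_only_K4 {V : Type*} (G : SimpleGraph V)
    (htri : ∀ (a : V) (w : G.Walk a a), w.IsCycle → Odd w.length → w.length = 3)
    (hconn : G.Connected)
    (hcut : ∀ a : V, (G.induce {w : V | w ≠ a}).Connected)
    (v₁ v₂ v₃ u : V)
    (h12 : v₁ ≠ v₂) (h13 : v₁ ≠ v₃) (h23 : v₂ ≠ v₃)
    (hu1 : u ≠ v₁) (hu2 : u ≠ v₂) (hu3 : u ≠ v₃)
    (e1 : G.Adj v₁ v₂) (e2 : G.Adj v₁ v₃) (e3 : G.Adj v₂ v₃)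
    (e4 : G.Adj u v₁) (e5 : G.Adj u v₂) (e6 : G.Adj u v₃) :
    ∀ w : V, w = v₁ ∨ w = v₂ ∨ w = v₃ ∨ w = u := by
  intro w
  by_contra hw
  push_neg at hw
  obtain ⟨hw1, hw2, hw3, hwu⟩ := hw
  obtain ⟨W⟩ := hconn w u
  obtain ⟨y, d, hyd, hd, p, hp, hpT, hpW⟩ :=
    firstHit {v : V | v = v₁ ∨ v = v₂ ∨ v = v₃ ∨ v = u} W (by simp) (by
      simp only [Set.mem_setOf_eq]; push_neg; exact ⟨hw1, hw2, hw3, hwu⟩)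
  have hy := hpT y p.end_mem_support
  simp only [Set.mem_setOf_eq] at hy
  push_neg at hy
  obtain ⟨hy1, hy2, hy3, hyu⟩ := hy
  rcases hd with hd | hd | hd | hd
  · subst hd
    exact noAttach htri (hcut _) e1 e2 e4.symm e3 e5.symm e6.symm hy2 hy3 hyu hy1 hyd.symm
  · subst hd
    exact noAttach htri (hcut _) e1.symm e3 e5.symm e2 e4.symm e6.symm hy1 hy3 hyu hy2 hyd.symm
  · subst hd
    exact noAttach htri (hcut _) e2.symm e3.symm e6.symm e1 e4.symm e5.symm hy1 hy2 hyu hy3 hyd.symm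
  · subst hd
    exact noAttach htri (hcut _) e4 e5 e6 e1 e2 e3 hy1 hy2 hy3 hyu hyd.symm
end
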